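/- arXiv:1207.5467 — 5 statements merged into one kernel-verified Lean document; each statement's English description precedes it below -/
import Mathlib

section
/- Fix integers n ≥ 2 and r ≥ n, and an (n−1)-element subset I = {i_1 < … < i_{n−1}} of [r] = {1,…,r}; write the complement [r] \ I = {d_0 < d_1 < … < d_{r−n}}. Then for all integers 0 ≤ p ≤ r−n and 1 ≤ q ≤ n: if q = d_p − p, then (r−n)! · (∏_{α=1}^{q−1} (p+q−i_α)_+ · ∏_{α=q}^{n−1} (i_α−p−q)_+) / ((p+q−1)! · (r−p−q)!) = (r−n)! · ∏_{ℓ∈{0,…,r−n}, ℓ≠p} 1/|d_ℓ − d_p|; and if q ≠ d_p − p, then (r−n)! · (∏_{α=1}^{q−1} (p+q−i_α)_+ · ∏_{α=q}^{n−1} (i_α−p−q)_+) / ((p+q−1)! · (r−p−q)!) = 0. -/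
open MeasureTheory Filter

noncomputable section

/-- `σ_b(a)`: sum over all `b`-element subsets `J` of `{1,…,a}` of the product of elements. -/
def sigmaFn (b a : ℕ) : ℕ := ∑ J ∈ (Finset.Icc 1 a).powersetCard b, ∏ j ∈ J, j

/-- the `(α+1)`-st smallest element of a finite set of naturals (0-indexed). -/
def nthElt (I : Finset ℕ) (α : ℕ) : ℕ := (I.sort (· ≤ ·)).getD α 0

/-- the product `∏_{α=1}^{q−1} (p+q−i_α)_+ · ∏_{α=q}^{n−1} (i_α−p−q)_+`. -/
def pureNum (n p q : ℕ) (I : Finset ℕ) : ℤ :=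
  ∏ α ∈ Finset.range (n - 1),
    if α + 1 < q then max ((p : ℤ) + q - nthElt I α) 0
    else max ((nthElt I α : ℤ) - p - q) 0

/-- the entry `k_{p,q}(π(r,I))` of the pure diagram `π(r,I)`. -/
def kPure (n r p q : ℕ) (I : Finset ℕ) : ℝ :=
  ((r - n).factorial : ℝ) * (pureNum n p q I : ℝ) /
    (((p + q - 1).factorial : ℝ) * ((r - p - q).factorial : ℝ))

/-- `μ_{q,n}(r,p)`. -/
def muFn (n q r p : ℕ) : ℝ :=
  (1 / 2 ^ n) * ((p : ℝ) ^ (q - 1) * ((r : ℝ) - p - n) ^ (n - q)) /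
    ((q - 1).factorial * (n - q).factorial)

lemma nthElt_mem {S : Finset ℕ} {α : ℕ} (h : α < S.card) : nthElt S α ∈ S := by
  have hl : α < (S.sort (· ≤ ·)).length := by rwa [Finset.length_sort]
  rw [nthElt, List.getD_eq_getElem _ _ hl]
  exact (Finset.mem_sort _).1 (List.getElem_mem _)

lemma nthElt_strictMono {S : Finset ℕ} {α β : ℕ} (hab : α < β) (h : β < S.card) :
    nthElt S α < nthElt S β := by
  have hl : β < (S.sort (· ≤ ·)).length := by rwa [Finset.length_sort]
  have hl' : α < (S.sort (· ≤ ·)).length := lt_trans hab hl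
  rw [nthElt, nthElt, List.getD_eq_getElem _ _ hl, List.getD_eq_getElem _ _ hl']
  exact S.sortedLT_sort.strictMono_get (show (⟨α, hl'⟩ : Fin _) < ⟨β, hl⟩ from hab)

lemma nthElt_surj {S : Finset ℕ} {x : ℕ} (hx : x ∈ S) :
    ∃ j, j < S.card ∧ nthElt S j = x := by
  have hx' : x ∈ S.sort (· ≤ ·) := (Finset.mem_sort _).2 hx
  obtain ⟨j, hj, hget⟩ := List.mem_iff_getElem.1 hx'
  exact ⟨j, by rwa [Finset.length_sort] at hj,
    by rw [nthElt, List.getD_eq_getElem _ _ hj]; exact hget⟩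

lemma image_nthElt (S : Finset ℕ) : (Finset.range S.card).image (nthElt S) = S := by
  apply Finset.Subset.antisymm
  · intro x hx
    obtain ⟨j, hj, rfl⟩ := Finset.mem_image.1 hx
    exact nthElt_mem (Finset.mem_range.1 hj)
  · intro x hx
    obtain ⟨j, hj, rfl⟩ := nthElt_surj hx
    exact Finset.mem_image.2 ⟨j, Finset.mem_range.2 hj, rfl⟩

lemma nthElt_injOn {S : Finset ℕ} {α β : ℕ} (ha : α < S.card) (hb : β < S.card)
    (h : nthElt S α = nthElt S β) : α = β := by
  rcases lt_trichotomy α β with h' | h' | h'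
  · exact absurd h (ne_of_lt (nthElt_strictMono h' hb))
  · exact h'
  · exact absurd h.symm (ne_of_lt (nthElt_strictMono h' ha))

lemma count_nthElt {S : Finset ℕ} {α : ℕ} (h : α < S.card) :
    (S.filter (· < nthElt S α)).card = α := by
  have himg : S.filter (· < nthElt S α) = (Finset.range α).image (nthElt S) := by
    ext x
    simp only [Finset.mem_filter, Finset.mem_image, Finset.mem_range]
    constructor
    · rintro ⟨hxS, hlt⟩
      obtain ⟨j, hj, rfl⟩ := nthElt_surj hxS
      refine ⟨j, ?_, rfl⟩
      by_contra hc
      exact absurd hlt (not_lt.2 (le_of_not_gt (fun h2 => hc (by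
        rcases lt_or_ge j α with h3 | h3
        · exact h3
        · rcases eq_or_lt_of_le h3 with rfl | h4
          · exact absurd hlt (lt_irrefl _)
          · exact absurd hlt (not_lt.2 (le_of_lt (nthElt_strictMono h4 hj)))))))
    · rintro ⟨j, hj, rfl⟩
      exact ⟨nthElt_mem (lt_trans hj h), nthElt_strictMono hj h⟩
  rw [himg, Finset.card_image_of_injOn, Finset.card_range]
  intro a ha b hb hab
  exact nthElt_injOn (lt_trans (Finset.mem_range.1 ha) h)
    (lt_trans (Finset.mem_range.1 hb) h) hab

lemma nthElt_lt_iff {S : Finset ℕ} {α x : ℕ} (h : α < S.card) :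
    nthElt S α < x ↔ α < (S.filter (· < x)).card := by
  constructor
  · intro hlt
    have hsub : (Finset.range (α + 1)).image (nthElt S) ⊆ S.filter (· < x) := by
      intro y hy
      obtain ⟨j, hj, rfl⟩ := Finset.mem_image.1 hy
      have hj' : j < α + 1 := Finset.mem_range.1 hj
      have hjcard : j < S.card := lt_of_lt_of_le hj' h
      refine Finset.mem_filter.2 ⟨nthElt_mem hjcard, ?_⟩
      rcases Nat.lt_succ_iff_lt_or_eq.1 hj' with h2 | rfl
      · exact lt_trans (nthElt_strictMono h2 h) hlt
      · exact hlt
    have hcard : ((Finset.range (α + 1)).image (nthElt S)).card = α + 1 := by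
      rw [Finset.card_image_of_injOn, Finset.card_range]
      intro a ha b hb hab
      exact nthElt_injOn (lt_of_lt_of_le (Finset.mem_range.1 ha) h)
        (lt_of_lt_of_le (Finset.mem_range.1 hb) h) hab
    have := Finset.card_le_card hsub
    omega
  · intro hlt
    by_contra hc
    push_neg at hc
    have hsub : S.filter (· < x) ⊆ S.filter (· < nthElt S α) := by
      intro y hy
      rw [Finset.mem_filter] at hy ⊢
      exact ⟨hy.1, lt_of_lt_of_le hy.2 hc⟩
    have := Finset.card_le_card hsub
    rw [count_nthElt h] at this
    omega

lemma nthElt_count_eq {S : Finset ℕ} {x : ℕ} (hx : x ∈ S) :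
    nthElt S ((S.filter (· < x)).card) = x := by
  obtain ⟨j, hj, rfl⟩ := nthElt_surj hx
  rw [count_nthElt hj]

lemma prod_nthElt {M : Type*} [CommMonoid M] (S : Finset ℕ) (f : ℕ → M) :
    ∏ α ∈ Finset.range S.card, f (nthElt S α) = ∏ x ∈ S, f x := by
  conv_rhs => rw [← image_nthElt S]
  rw [Finset.prod_image]
  intro a ha b hb hab
  exact nthElt_injOn (Finset.mem_range.1 ha) (Finset.mem_range.1 hb) hab

lemma prod_sub_Icc (a : ℕ) : ∏ x ∈ Finset.Icc 1 a, (a + 1 - x) = a.factorial := by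
  rw [show Finset.Icc 1 a = Finset.Ico 1 (a+1) by rw [Finset.Ico_add_one_right_eq_Icc]]
  rw [← Finset.prod_Ico_id_eq_factorial a]
  refine Finset.prod_nbij' (i := fun x => a + 1 - x) (j := fun x => a + 1 - x)
    (fun x hx => ?_) (fun x hx => ?_) (fun x hx => ?_) (fun x hx => ?_) (fun x hx => ?_) <;>
    simp only [Finset.mem_Ico] at * <;> omega

lemma prod_sub_Icc' (a b : ℕ) : ∏ x ∈ Finset.Icc (a+1) b, (x - a) = (b - a).factorial := by
  rw [← prod_sub_Icc (b - a)]
  refine Finset.prod_nbij' (i := fun x => b + 1 - x) (j := fun x => b + 1 - x) (t := Finset.Icc 1 (b-a))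
    (fun x hx => ?_) (fun x hx => ?_) (fun x hx => ?_) (fun x hx => ?_) (fun x hx => ?_) <;>
    simp only [Finset.mem_Icc] at * <;> omega

theorem stmt1 (n r : ℕ) (hn : 2 ≤ n) (hr : n ≤ r) (I : Finset ℕ)
    (hIsub : I ⊆ Finset.Icc 1 r) (hIcard : I.card = n - 1)
    (p q : ℕ) (hp : p ≤ r - n) (hq1 : 1 ≤ q) (hqn : q ≤ n) :
    ((q : ℤ) = (nthElt (Finset.Icc 1 r \ I) p : ℤ) - p →
      kPure n r p q I =
        ((r - n).factorial : ℝ) *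
          ∏ ℓ ∈ (Finset.range (r - n + 1)).erase p,
            1 / |(nthElt (Finset.Icc 1 r \ I) ℓ : ℝ) - (nthElt (Finset.Icc 1 r \ I) p : ℝ)|) ∧
    ((q : ℤ) ≠ (nthElt (Finset.Icc 1 r \ I) p : ℤ) - p → kPure n r p q I = 0) := by
  set D := Finset.Icc 1 r \ I with hD
  have hIccr : (Finset.Icc 1 r).card = r := by rw [Nat.card_Icc]; omega
  have hDcard : D.card = r - n + 1 := by
    rw [hD, Finset.card_sdiff_of_subset hIsub, hIccr, hIcard]; omega

  have hpD : p < D.card := by omega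
  have hsler : p + q ≤ r := by omega
  have hsplit : (I.filter (· < p + q)).card + (D.filter (· < p + q)).card + 1 = p + q := by
    have hunion : D ∪ I = Finset.Icc 1 r := Finset.sdiff_union_of_subset hIsub
    have hdisj : Disjoint D I := Finset.sdiff_disjoint
    have hfc : ((Finset.Icc 1 r).filter (· < p + q)).card = p + q - 1 := by
      have he : (Finset.Icc 1 r).filter (· < p + q) = Finset.Icc 1 (p + q - 1) := by
        ext x; simp only [Finset.mem_filter, Finset.mem_Icc]; omega
      rw [he, Nat.card_Icc]; omega
    rw [← hunion, Finset.filter_union,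
      Finset.card_union_of_disjoint (Finset.disjoint_filter_filter hdisj)] at hfc
    omega
  have hcI_le : (I.filter (· < p + q)).card ≤ I.card := Finset.card_filter_le _ _
  constructor
  · -- Part 1
    intro heq
    have hs : nthElt D p = p + q := by omega
    have hsD : p + q ∈ D := hs ▸ nthElt_mem hpD
    have hsI : p + q ∉ I := (Finset.mem_sdiff.1 hsD).2
    have hcD : (D.filter (· < p + q)).card = p := by
      have := count_nthElt hpD; rwa [hs] at this
    have hcI : (I.filter (· < p + q)).card = q - 1 := by omega
    -- rewrite pureNum as product over I of absolute values
    have hpure : pureNum n p q I = ∏ x ∈ I, |(x : ℤ) - ((p + q : ℕ) : ℤ)| := by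
      rw [pureNum, show n - 1 = I.card from hIcard.symm,
        ← prod_nthElt I (fun x => |(x : ℤ) - ((p + q : ℕ) : ℤ)|)]
      apply Finset.prod_congr rfl
      intro α hα
      have hαc : α < I.card := Finset.mem_range.1 hα
      by_cases hcase : α + 1 < q
      · have hlt : nthElt I α < p + q := (nthElt_lt_iff hαc).2 (by omega)
        rw [if_pos hcase, abs_of_neg (by push_cast; omega),
          max_eq_left (by push_cast; omega)]
        push_cast; ring
      · have hge : ¬ nthElt I α < p + q := by rw [nthElt_lt_iff hαc]; omega
        have hne' : nthElt I α ≠ p + q := fun h => hsI (h ▸ nthElt_mem hαc)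
        rw [if_neg hcase, abs_of_pos (by push_cast; omega),
          max_eq_left (by push_cast; omega)]
        push_cast; ring
    -- key integer identity
    have hdisj2 : Disjoint I (D.erase (p + q)) :=
      Finset.disjoint_of_subset_right (Finset.erase_subset _ _)
        Finset.sdiff_disjoint.symm
    have hun : I ∪ D.erase (p + q) = (Finset.Icc 1 r).erase (p + q) := by
      ext x
      simp only [Finset.mem_union, Finset.mem_erase, hD, Finset.mem_sdiff]
      constructor
      · rintro (hx | ⟨hx1, hx2, _⟩)
        · exact ⟨fun h => hsI (h ▸ hx), hIsub hx⟩
        · exact ⟨hx1, hx2⟩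
      · rintro ⟨hx1, hx2⟩
        by_cases hxI : x ∈ I
        · exact Or.inl hxI
        · exact Or.inr ⟨hx1, hx2, hxI⟩
    have hkey : (∏ x ∈ I, |(x : ℤ) - ((p + q : ℕ) : ℤ)|) *
        (∏ x ∈ D.erase (p + q), |(x : ℤ) - ((p + q : ℕ) : ℤ)|) =
        ((p + q - 1).factorial : ℤ) * ((r - (p + q)).factorial : ℤ) := by
      rw [← Finset.prod_union hdisj2, hun]
      have hsplitIcc : (Finset.Icc 1 r).erase (p + q) =
          Finset.Icc 1 (p + q - 1) ∪ Finset.Icc (p + q + 1) r := by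
        ext x
        simp only [Finset.mem_erase, Finset.mem_Icc, Finset.mem_union]
        omega
      rw [hsplitIcc, Finset.prod_union (by
        rw [Finset.disjoint_left]
        intro x hx1 hx2
        simp only [Finset.mem_Icc] at hx1 hx2
        omega)]
      congr 1
      · rw [Finset.prod_congr rfl (fun x hx => ?_), ← Nat.cast_prod, prod_sub_Icc (p + q - 1)]
        simp only [Finset.mem_Icc] at hx
        rw [abs_of_neg (by push_cast; omega)]
        push_cast
        omega
      · rw [Finset.prod_congr rfl (fun x hx => ?_), ← Nat.cast_prod,
          show Finset.Icc (p + q + 1) r = Finset.Icc ((p + q) + 1) r from rfl,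
          prod_sub_Icc' (p + q) r]
        simp only [Finset.mem_Icc] at hx
        rw [abs_of_pos (by push_cast; omega)]
        push_cast
        omega
    -- reindex RHS product
    have hR : (∏ ℓ ∈ (Finset.range (r - n + 1)).erase p,
          1 / |(nthElt D ℓ : ℝ) - (nthElt D p : ℝ)|) =
        ∏ x ∈ D.erase (p + q), 1 / |(x : ℝ) - ((p + q : ℕ) : ℝ)| := by
      rw [← hDcard]
      refine Finset.prod_nbij' (i := nthElt D) (j := fun x => (D.filter (· < x)).card)
        ?_ ?_ ?_ ?_ ?_
      · intro ℓ hℓ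
        rw [Finset.mem_erase, Finset.mem_range] at hℓ
        refine Finset.mem_erase.2 ⟨?_, nthElt_mem hℓ.2⟩
        intro h
        exact hℓ.1 (nthElt_injOn hℓ.2 hpD (h.trans hs.symm))
      · intro x hx
        rw [Finset.mem_erase] at hx
        refine Finset.mem_erase.2 ⟨?_, Finset.mem_range.2 ?_⟩
        · intro h
          apply hx.1
          have h2 : (D.filter (· < x)).card = p := h
          have h3 := nthElt_count_eq hx.2
          rw [h2, hs] at h3
          exact h3.symm
        · refine Finset.card_lt_card ?_
          rw [Finset.ssubset_iff_of_subset (Finset.filter_subset _ _)]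
          exact ⟨x, hx.2, by simp⟩
      · intro ℓ hℓ
        rw [Finset.mem_erase, Finset.mem_range] at hℓ
        exact count_nthElt hℓ.2
      · intro x hx
        rw [Finset.mem_erase] at hx
        exact nthElt_count_eq hx.2
      · intro ℓ hℓ
        rw [hs]
    rw [hR]
    unfold kPure
    rw [hpure]
    simp only [one_div, ← Finset.prod_inv_distrib]
    have hBpos : (0 : ℝ) < ∏ x ∈ D.erase (p + q), |(x : ℝ) - ((p + q : ℕ) : ℝ)| := by
      apply Finset.prod_pos
      intro x hx
      rw [Finset.mem_erase] at hx
      have : (x : ℝ) ≠ ((p + q : ℕ) : ℝ) := by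
        exact_mod_cast fun h => hx.1 (by exact_mod_cast h)
      exact abs_pos.2 (sub_ne_zero.2 this)
    have hcast : ((∏ x ∈ I, |(x : ℤ) - ((p + q : ℕ) : ℤ)| : ℤ) : ℝ) *
        (∏ x ∈ D.erase (p + q), |(x : ℝ) - ((p + q : ℕ) : ℝ)|) =
        ((p + q - 1).factorial : ℝ) * ((r - (p + q)).factorial : ℝ) := by
      have h2 := congrArg (fun z : ℤ => (z : ℝ)) hkey
      push_cast at h2 ⊢
      exact h2
    rw [Nat.sub_sub]
    have hf1 : ((p + q - 1).factorial : ℝ) ≠ 0 := Nat.cast_ne_zero.2 (Nat.factorial_ne_zero _)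
    have hf2 : ((r - (p + q)).factorial : ℝ) ≠ 0 := Nat.cast_ne_zero.2 (Nat.factorial_ne_zero _)
    have hBne := ne_of_gt hBpos
    field_simp
    push_cast at hcast hBpos
    rw [Finset.prod_div_distrib, Finset.prod_const_one]
    push_cast
    rw [← hcast, mul_one_div, mul_div_assoc, div_self (ne_of_gt hBpos), mul_one]
  · -- Part 2
    intro hne
    have hsmem : p + q ∈ Finset.Icc 1 r := Finset.mem_Icc.2 ⟨by omega, hsler⟩
    by_cases hsI : p + q ∈ I
    · have hβ : (I.filter (· < p + q)).card < I.card := by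
        refine Finset.card_lt_card ?_
        rw [Finset.ssubset_iff_of_subset (Finset.filter_subset _ _)]
        exact ⟨p + q, hsI, by simp⟩
      have hnth : nthElt I ((I.filter (· < p + q)).card) = p + q := nthElt_count_eq hsI
      have hzero : pureNum n p q I = 0 := by
        rw [pureNum]
        apply Finset.prod_eq_zero (Finset.mem_range.2 (by omega : (I.filter (· < p + q)).card < n - 1))
        rw [hnth]
        split_ifs <;> (push_cast; rw [max_eq_right (by omega)])
      unfold kPure; rw [hzero]; simp
    · have hsDm : p + q ∈ D := Finset.mem_sdiff.2 ⟨hsmem, hsI⟩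
      have hm : nthElt D ((D.filter (· < p + q)).card) = p + q := nthElt_count_eq hsDm
      have hmp : (D.filter (· < p + q)).card ≠ p := by
        intro h
        apply hne
        rw [h] at hm
        rw [hm]
        push_cast; ring
      rcases lt_or_gt_of_ne hmp with hlt | hgt
      · -- m < p : factor at index q - 1
        have hq : q - 1 < I.card := by omega
        have h1 : nthElt I (q - 1) < p + q := (nthElt_lt_iff hq).2 (by omega)
        have hzero : pureNum n p q I = 0 := by
          rw [pureNum]
          apply Finset.prod_eq_zero (Finset.mem_range.2 (by omega : q - 1 < n - 1))
          rw [if_neg (by omega)]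
          exact max_eq_right (by push_cast; omega)
        unfold kPure; rw [hzero]; simp
      · -- m > p : factor at index q - 2
        have hq2 : 2 ≤ q := by omega
        have hq2' : q - 2 < I.card := by omega
        have hge : ¬ nthElt I (q - 2) < p + q := by rw [nthElt_lt_iff hq2']; omega
        have hne' : nthElt I (q - 2) ≠ p + q := fun h => hsI (h ▸ nthElt_mem hq2')
        have hzero : pureNum n p q I = 0 := by
          rw [pureNum]
          apply Finset.prod_eq_zero (Finset.mem_range.2 (by omega : q - 2 < n - 1))
          rw [if_pos (by omega)]
          exact max_eq_right (by push_cast; omega)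
        unfold kPure; rw [hzero]; simp
end
end

section
/- Fix integers n ≥ 2, r ≥ n, 1 ≤ q ≤ n and 0 ≤ p ≤ r−n. Then (1/2) · Σ_I k_{p,q}(π(r,I)) = C(r−n,p) · (1/2) · σ_{q−1}(p+q−1) · σ_{n−q}(r−p−q) / ( ((p+q−1)!/p!) · ((r−p−q)!/(r−p−n)!) ), where the sum is over all (n−1)-element subsets I of [r] = {1,…,r} and C(r−n,p) denotes the binomial coefficient. -/
open MeasureTheory Filter

noncomputable section

open Finset in
lemma nthElt_eq {I : Finset ℕ} {k : ℕ} (h : I.card = k) (α : ℕ) (hα : α < k) :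
    nthElt I α = I.orderEmbOfFin h ⟨α, hα⟩ := by
  rw [Finset.orderEmbOfFin_apply, nthElt]
  rw [List.getD_eq_getElem?_getD, List.getElem?_eq_getElem (by rw [length_sort, h]; exact hα)]
  simp

open Finset in
lemma orderEmb_lt_iff {k m : ℕ} {I : Finset ℕ} (h : I.card = k) (α : Fin k) :
    I.orderEmbOfFin h α < m ↔ (α : ℕ) < (I.filter (· < m)).card := by
  set e := I.orderEmbOfFin h with he
  have hmono : StrictMono e := (I.orderEmbOfFin h).strictMono
  have himg : I.filter (· < m) = (Finset.univ.filter (fun β : Fin k => e β < m)).image e := by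
    ext x
    simp only [mem_image, mem_filter, mem_univ, true_and]
    constructor
    · rintro ⟨hx, hlt⟩
      have : x ∈ Set.range e := by rw [he, Finset.range_orderEmbOfFin]; exact hx
      obtain ⟨β, rfl⟩ := this
      exact ⟨β, hlt, rfl⟩
    · rintro ⟨β, hβ, rfl⟩; exact ⟨Finset.orderEmbOfFin_mem _ _ _, hβ⟩
  rw [himg, card_image_of_injective _ hmono.injective]
  set S := Finset.univ.filter (fun β : Fin k => e β < m) with hS
  constructor
  · intro hlt
    have hsub : Finset.Iic α ⊆ S := by
      intro γ hγ
      simp only [hS, mem_filter, mem_univ, true_and]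
      exact lt_of_le_of_lt (hmono.monotone (mem_Iic.mp hγ)) hlt
    have := card_le_card hsub
    rw [Fin.card_Iic] at this
    omega
  · intro hlt
    by_contra hge
    push_neg at hge
    have hsub : S ⊆ Finset.Iio α := by
      intro γ hγ
      simp only [hS, mem_filter, mem_univ, true_and] at hγ
      rw [mem_Iio]
      by_contra h'
      exact absurd (lt_of_le_of_lt (hmono.monotone (not_lt.mp h')) hγ) (not_lt.mpr hge)
    have := card_le_card hsub
    rw [Fin.card_Iio] at this
    omega

open Finset in
lemma filter_lt_img {k m : ℕ} {I : Finset ℕ} (h : I.card = k) :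
    I.filter (· < m) = (Finset.univ.filter (fun β : Fin k => I.orderEmbOfFin h β < m)).image
      (I.orderEmbOfFin h) := by
  ext x
  simp only [Finset.mem_image, Finset.mem_filter, Finset.mem_univ, true_and]
  constructor
  · rintro ⟨hx, hlt⟩
    have : x ∈ Set.range (I.orderEmbOfFin h) := by rw [Finset.range_orderEmbOfFin]; exact hx
    obtain ⟨β, rfl⟩ := this
    exact ⟨β, hlt, rfl⟩
  · rintro ⟨β, hβ, rfl⟩; exact ⟨Finset.orderEmbOfFin_mem _ _ _, hβ⟩

open Finset in
lemma pureNum_eq (n p q : ℕ) (hn : 2 ≤ n) (hq1 : 1 ≤ q) (hqn : q ≤ n)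
    (I : Finset ℕ) (hcard : I.card = n - 1) :
    pureNum n p q I =
      if (I.filter (· < p + q)).card = q - 1 ∧ p + q ∉ I then
        (∏ i ∈ I.filter (· < p + q), ((p : ℤ) + q - i)) *
          ∏ i ∈ I.filter (fun i => p + q < i), ((i : ℤ) - p - q) else 0 := by
  set m := p + q with hm
  set e := I.orderEmbOfFin hcard with he
  have hmono : StrictMono e := (I.orderEmbOfFin hcard).strictMono
  set c := (I.filter (· < m)).card with hc
  have hlt : ∀ α : Fin (n-1), (e α < m ↔ (α : ℕ) < c) := fun α => orderEmb_lt_iff hcard α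
  have hcle : c ≤ n - 1 := hcard ▸ card_le_card (filter_subset _ _)
  -- rewrite pureNum as a product over Fin (n-1)
  have hpn : pureNum n p q I = ∏ α : Fin (n-1),
      (if (α : ℕ) + 1 < q then max ((p : ℤ) + q - e α) 0 else max ((e α : ℤ) - p - q) 0) := by
    rw [pureNum, ← Fin.prod_univ_eq_prod_range]
    exact Finset.prod_congr rfl fun α _ => by rw [nthElt_eq hcard α α.2]
  by_cases hcond : c = q - 1 ∧ m ∉ I
  · obtain ⟨hcq, hmI⟩ := hcond
    rw [if_pos ⟨hcq, hmI⟩, hpn]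
    have hkey : ∀ α : Fin (n-1), ((α : ℕ) + 1 < q ↔ e α < m) := by
      intro α; rw [hlt α, hcq]; omega
    rw [← Finset.prod_filter_mul_prod_filter_not Finset.univ (fun α : Fin (n-1) => e α < m)]
    congr 1
    · have himg := filter_lt_img (m := m) hcard
      rw [← he] at himg
      rw [himg, Finset.prod_image (fun x _ y _ hxy => hmono.injective hxy)]
      refine Finset.prod_congr rfl fun α hα => ?_
      simp only [mem_filter, mem_univ, true_and] at hα
      rw [if_pos ((hkey α).mpr hα), max_eq_left]
      rw [hm] at hα; omega
    · have himg2 : I.filter (fun i => m < i) =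
          (Finset.univ.filter (fun β : Fin (n-1) => ¬ e β < m)).image e := by
        have : I.filter (fun i => m < i) = I.filter (fun i => ¬ i < m) := by
          apply Finset.filter_congr
          intro x hx
          have : x ≠ m := fun h => hmI (h ▸ hx)
          omega
        rw [this]
        ext x
        simp only [mem_image, mem_filter, mem_univ, true_and]
        constructor
        · rintro ⟨hx, hge⟩
          have : x ∈ Set.range e := by rw [he, Finset.range_orderEmbOfFin]; exact hx
          obtain ⟨β, rfl⟩ := this
          exact ⟨β, hge, rfl⟩
        · rintro ⟨β, hβ, rfl⟩; exact ⟨Finset.orderEmbOfFin_mem _ _ _, hβ⟩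
      rw [himg2, Finset.prod_image (fun x _ y _ hxy => hmono.injective hxy)]
      refine Finset.prod_congr rfl fun α hα => ?_
      simp only [mem_filter, mem_univ, true_and] at hα
      rw [if_neg (fun h => hα ((hkey α).mp h)), max_eq_left]
      have h1 : m ≤ e α := not_lt.mp hα
      have h2 : e α ≠ m := fun h => hmI (h ▸ Finset.orderEmbOfFin_mem _ _ _)
      rw [hm] at h1 h2; omega
  · rw [if_neg hcond, hpn]
    rcases Nat.lt_trichotomy c (q - 1) with hcase | hcase | hcase
    · -- c < q - 1 : zero factor at index c
      have hcn : c < n - 1 := lt_of_lt_of_le hcase (by omega)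
      apply Finset.prod_eq_zero (Finset.mem_univ (⟨c, hcn⟩ : Fin (n-1)))
      have h1 : (c : ℕ) + 1 < q := by omega
      rw [if_pos h1]
      have : ¬ e ⟨c, hcn⟩ < m := by rw [hlt]; simp
      have : (m : ℤ) ≤ e ⟨c, hcn⟩ := by exact_mod_cast not_lt.mp this
      rw [hm] at this; push_cast at this ⊢
      rw [max_eq_right]; omega
    · -- c = q - 1 and m ∈ I
      have hmI : m ∈ I := by
        by_contra hmI
        exact hcond ⟨hcase, hmI⟩
      have : m ∈ Set.range e := by rw [he, Finset.range_orderEmbOfFin]; exact hmI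
      obtain ⟨α0, hα0⟩ := this
      apply Finset.prod_eq_zero (Finset.mem_univ α0)
      have hne : ¬ e α0 < m := by omega
      have : ¬ ((α0 : ℕ) < c) := fun h => hne ((hlt α0).mpr h)
      rw [if_neg (by omega), hα0]
      simp [hm]
    · -- c > q - 1 : zero factor at index q - 1
      have hqn1 : q - 1 < n - 1 := lt_of_lt_of_le hcase hcle
      apply Finset.prod_eq_zero (Finset.mem_univ (⟨q - 1, hqn1⟩ : Fin (n-1)))
      have h1 : ¬ ((q - 1 : ℕ) + 1 < q) := by omega
      rw [if_neg h1]
      have : e ⟨q - 1, hqn1⟩ < m := by rw [hlt]; simpa using hcase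
      rw [hm] at this
      rw [max_eq_right]; omega

open Finset in
lemma sigma_rev (a b : ℕ) :
    ∑ A ∈ (Finset.Icc 1 a).powersetCard b, ∏ i ∈ A, (((a + 1 : ℕ) : ℤ) - i)
      = (sigmaFn b a : ℤ) := by
  rw [sigmaFn]
  push_cast
  refine Finset.sum_nbij' (fun A => A.image (fun x => a + 1 - x))
    (fun A => A.image (fun x => a + 1 - x)) ?_ ?_ ?_ ?_ ?_
  · intro A hA
    rw [mem_powersetCard] at hA ⊢
    obtain ⟨hsub, hcard⟩ := hA
    constructor
    · intro y hy
      rw [mem_image] at hy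
      obtain ⟨x, hx, rfl⟩ := hy
      have := hsub hx
      rw [mem_Icc] at this ⊢
      omega
    · rw [Finset.card_image_of_injOn, hcard]
      intro x hx y hy hxy
      dsimp only at hxy
      have hx' := mem_Icc.mp (hsub hx)
      have hy' := mem_Icc.mp (hsub hy)
      omega
  · intro A hA
    rw [mem_powersetCard] at hA ⊢
    obtain ⟨hsub, hcard⟩ := hA
    constructor
    · intro y hy
      rw [mem_image] at hy
      obtain ⟨x, hx, rfl⟩ := hy
      have := hsub hx
      rw [mem_Icc] at this ⊢
      omega
    · rw [Finset.card_image_of_injOn, hcard]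
      intro x hx y hy hxy
      dsimp only at hxy
      have hx' := mem_Icc.mp (hsub hx)
      have hy' := mem_Icc.mp (hsub hy)
      omega
  · intro A hA
    rw [mem_powersetCard] at hA
    rw [Finset.image_image]
    have h2 : Set.EqOn ((fun x => a + 1 - x) ∘ (fun x => a + 1 - x)) id ↑A := by
      intro x hx
      have := mem_Icc.mp (hA.1 hx)
      simp only [Function.comp, id]
      omega
    rw [Finset.image_congr h2, Finset.image_id]
  · intro A hA
    rw [mem_powersetCard] at hA
    rw [Finset.image_image]
    have h2 : Set.EqOn ((fun x => a + 1 - x) ∘ (fun x => a + 1 - x)) id ↑A := by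
      intro x hx
      have := mem_Icc.mp (hA.1 hx)
      simp only [Function.comp, id]
      omega
    rw [Finset.image_congr h2, Finset.image_id]
  · intro A hA
    rw [mem_powersetCard] at hA
    rw [Finset.prod_image (by
      intro x hx y hy hxy
      have hx' := mem_Icc.mp (hA.1 hx)
      have hy' := mem_Icc.mp (hA.1 hy)
      dsimp only at hxy
      omega)]
    refine Finset.prod_congr rfl fun x hx => ?_
    have := mem_Icc.mp (hA.1 hx)
    have h1 : (x : ℤ) ≤ (a : ℤ) := by exact_mod_cast this.2
    push_cast [Nat.cast_sub (by omega : x ≤ a + 1)]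
    ring

open Finset in
lemma sigma_shift (m r b : ℕ) (hmr : m ≤ r) :
    ∑ B ∈ (Finset.Icc (m + 1) r).powersetCard b, ∏ i ∈ B, ((i : ℤ) - m)
      = (sigmaFn b (r - m) : ℤ) := by
  rw [sigmaFn]
  push_cast
  refine Finset.sum_nbij' (fun B => B.image (fun x => x - m))
    (fun B => B.image (fun x => x + m)) ?_ ?_ ?_ ?_ ?_
  · intro B hB
    rw [mem_powersetCard] at hB ⊢
    obtain ⟨hsub, hcard⟩ := hB
    constructor
    · intro y hy
      rw [mem_image] at hy
      obtain ⟨x, hx, rfl⟩ := hy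
      have := mem_Icc.mp (hsub hx)
      rw [mem_Icc]; omega
    · rw [Finset.card_image_of_injOn, hcard]
      intro x hx y hy hxy
      dsimp only at hxy
      have hx' := mem_Icc.mp (hsub hx)
      have hy' := mem_Icc.mp (hsub hy)
      omega
  · intro B hB
    rw [mem_powersetCard] at hB ⊢
    obtain ⟨hsub, hcard⟩ := hB
    constructor
    · intro y hy
      rw [mem_image] at hy
      obtain ⟨x, hx, rfl⟩ := hy
      have := mem_Icc.mp (hsub hx)
      rw [mem_Icc]; omega
    · rw [Finset.card_image_of_injOn, hcard]
      intro x hx y hy hxy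
      dsimp only at hxy
      omega
  · intro B hB
    rw [mem_powersetCard] at hB
    rw [Finset.image_image]
    have h2 : Set.EqOn ((fun x => x + m) ∘ (fun x => x - m)) id ↑B := by
      intro x hx
      have := mem_Icc.mp (hB.1 hx)
      simp only [Function.comp, id]
      omega
    rw [Finset.image_congr h2, Finset.image_id]
  · intro B hB
    rw [mem_powersetCard] at hB
    rw [Finset.image_image]
    have h2 : Set.EqOn ((fun x => x - m) ∘ (fun x => x + m)) id ↑B := by
      intro x hx
      simp only [Function.comp, id]
      omega
    rw [Finset.image_congr h2, Finset.image_id]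
  · intro B hB
    rw [mem_powersetCard] at hB
    rw [Finset.prod_image (by
      intro x hx y hy hxy
      have hx' := mem_Icc.mp (hB.1 hx)
      have hy' := mem_Icc.mp (hB.1 hy)
      dsimp only at hxy
      omega)]
    refine Finset.prod_congr rfl fun x hx => ?_
    have := mem_Icc.mp (hB.1 hx)
    push_cast [Nat.cast_sub (by omega : m ≤ x)]
    ring

open Finset in
lemma sum_pureNum (n r p q : ℕ) (hn : 2 ≤ n) (hr : n ≤ r) (hq1 : 1 ≤ q) (hqn : q ≤ n)
    (hp : p ≤ r - n) :
    ∑ I ∈ (Finset.Icc 1 r).powersetCard (n - 1), pureNum n p q I =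
      (sigmaFn (q - 1) (p + q - 1) : ℤ) * (sigmaFn (n - q) (r - p - q) : ℤ) := by
  have hmr : p + q ≤ r := by omega
  set m := p + q with hm
  -- Step 1: rewrite using pureNum_eq
  rw [Finset.sum_congr rfl (fun I hI => pureNum_eq n p q hn hq1 hqn I
    (Finset.mem_powersetCard.mp hI).2)]
  rw [← Finset.sum_filter]
  -- Step 2: bijection with pairs
  have step2 : ∑ I ∈ ((Finset.Icc 1 r).powersetCard (n - 1)).filter
        (fun I => (I.filter (· < m)).card = q - 1 ∧ m ∉ I),
      ((∏ i ∈ I.filter (· < m), ((p : ℤ) + q - i)) *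
        ∏ i ∈ I.filter (fun i => m < i), ((i : ℤ) - p - q)) =
      ∑ P ∈ ((Finset.Icc 1 (m - 1)).powersetCard (q - 1)) ×ˢ
          ((Finset.Icc (m + 1) r).powersetCard (n - q)),
        ((∏ i ∈ P.1, ((p : ℤ) + q - i)) * ∏ i ∈ P.2, ((i : ℤ) - p - q)) := by
    refine Finset.sum_nbij' (fun I => (I.filter (· < m), I.filter (fun i => m < i)))
      (fun P => P.1 ∪ P.2) ?_ ?_ ?_ ?_ ?_
    · intro I hI
      simp only [Finset.mem_filter, Finset.mem_powersetCard] at hI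
      obtain ⟨⟨hsub, hcard⟩, hfc, hmI⟩ := hI
      have hunion : I.filter (· < m) ∪ I.filter (fun i => m < i) = I := by
        ext x
        simp only [Finset.mem_union, Finset.mem_filter]
        constructor
        · rintro (⟨h, _⟩ | ⟨h, _⟩) <;> exact h
        · intro hx
          have hne : x ≠ m := fun h => hmI (h ▸ hx)
          rcases Nat.lt_or_ge x m with h | h
          · exact Or.inl ⟨hx, h⟩
          · exact Or.inr ⟨hx, by omega⟩
      have hdisj : Disjoint (I.filter (· < m)) (I.filter (fun i => m < i)) := by
        rw [Finset.disjoint_filter]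
        intro x _ h; omega
      have hcards : (I.filter (· < m)).card + (I.filter (fun i => m < i)).card = n - 1 := by
        rw [← Finset.card_union_of_disjoint hdisj, hunion, hcard]
      rw [Finset.mem_product]
      dsimp only
      constructor
      · rw [Finset.mem_powersetCard]
        refine ⟨fun x hx => ?_, hfc⟩
        rw [Finset.mem_filter] at hx
        have := Finset.mem_Icc.mp (hsub hx.1)
        rw [Finset.mem_Icc]; omega
      · rw [Finset.mem_powersetCard]
        refine ⟨fun x hx => ?_, by omega⟩
        rw [Finset.mem_filter] at hx
        have := Finset.mem_Icc.mp (hsub hx.1)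
        rw [Finset.mem_Icc]; omega
    · rintro ⟨A, B⟩ hP
      rw [Finset.mem_product, Finset.mem_powersetCard, Finset.mem_powersetCard] at hP
      obtain ⟨⟨hAsub, hAcard⟩, hBsub, hBcard⟩ := hP
      have hA : ∀ x ∈ A, 1 ≤ x ∧ x ≤ m - 1 := fun x hx => Finset.mem_Icc.mp (hAsub hx)
      have hB : ∀ x ∈ B, m + 1 ≤ x ∧ x ≤ r := fun x hx => Finset.mem_Icc.mp (hBsub hx)
      have hdisj : Disjoint A B := by
        rw [Finset.disjoint_left]
        intro x hxA hxB
        have := hA x hxA; have := hB x hxB; omega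
      simp only [Finset.mem_filter, Finset.mem_powersetCard]
      refine ⟨⟨fun x hx => ?_, ?_⟩, ?_, ?_⟩
      · rw [Finset.mem_union] at hx
        rw [Finset.mem_Icc]
        rcases hx with hx | hx
        · have := hA x hx; omega
        · have := hB x hx; omega
      · rw [Finset.card_union_of_disjoint hdisj, hAcard, hBcard]; omega
      · have : (A ∪ B).filter (· < m) = A := by
          ext x
          simp only [Finset.mem_filter, Finset.mem_union]
          constructor
          · rintro ⟨hx | hx, hlt⟩
            · exact hx
            · have := hB x hx; omega
          · intro hx; have := hA x hx; exact ⟨Or.inl hx, by omega⟩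
        rw [this, hAcard]
      · intro hmem
        rw [Finset.mem_union] at hmem
        rcases hmem with hx | hx
        · have := hA m hx; omega
        · have := hB m hx; omega
    · intro I hI
      simp only [Finset.mem_filter, Finset.mem_powersetCard] at hI
      obtain ⟨⟨hsub, hcard⟩, hfc, hmI⟩ := hI
      dsimp only
      ext x
      simp only [Finset.mem_union, Finset.mem_filter]
      constructor
      · rintro (⟨h, _⟩ | ⟨h, _⟩) <;> exact h
      · intro hx
        have hne : x ≠ m := fun h => hmI (h ▸ hx)
        rcases Nat.lt_or_ge x m with h | h
        · exact Or.inl ⟨hx, h⟩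
        · exact Or.inr ⟨hx, by omega⟩
    · rintro ⟨A, B⟩ hP
      rw [Finset.mem_product, Finset.mem_powersetCard, Finset.mem_powersetCard] at hP
      obtain ⟨⟨hAsub, hAcard⟩, hBsub, hBcard⟩ := hP
      have hA : ∀ x ∈ A, 1 ≤ x ∧ x ≤ m - 1 := fun x hx => Finset.mem_Icc.mp (hAsub hx)
      have hB : ∀ x ∈ B, m + 1 ≤ x ∧ x ≤ r := fun x hx => Finset.mem_Icc.mp (hBsub hx)
      dsimp only
      have h1 : (A ∪ B).filter (· < m) = A := by
        ext x
        simp only [Finset.mem_filter, Finset.mem_union]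
        constructor
        · rintro ⟨hx | hx, hlt⟩
          · exact hx
          · have := hB x hx; omega
        · intro hx; have := hA x hx; exact ⟨Or.inl hx, by omega⟩
      have h2 : (A ∪ B).filter (fun i => m < i) = B := by
        ext x
        simp only [Finset.mem_filter, Finset.mem_union]
        constructor
        · rintro ⟨hx | hx, hlt⟩
          · have := hA x hx; omega
          · exact hx
        · intro hx; have := hB x hx; exact ⟨Or.inr hx, by omega⟩
      rw [h1, h2]
    · intro I hI; rfl
  rw [step2, Finset.sum_product]
  dsimp only
  rw [← Finset.sum_mul_sum]
  simp only [hm]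
  congr 1
  · rw [← sigma_rev (p + q - 1) (q - 1)]
    refine Finset.sum_congr rfl fun A _ => Finset.prod_congr rfl fun i _ => ?_
    have ha : ((p + q - 1 : ℕ) + 1 : ℕ) = p + q := by omega
    rw [ha]; push_cast; ring
  · have hb : r - p - q = r - (p + q) := by omega
    rw [hb, ← sigma_shift (p + q) r (n - q) (by omega)]
    refine Finset.sum_congr rfl fun B _ => Finset.prod_congr rfl fun i _ => ?_
    push_cast; ring

theorem stmt3 (n r p q : ℕ) (hn : 2 ≤ n) (hr : n ≤ r) (hq1 : 1 ≤ q) (hqn : q ≤ n)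
    (hp : p ≤ r - n) :
    (1 / 2 : ℝ) * ∑ I ∈ (Finset.Icc 1 r).powersetCard (n - 1), kPure n r p q I =
      ((r - n).choose p : ℝ) * (1 / 2) *
        ((sigmaFn (q - 1) (p + q - 1) : ℝ) * (sigmaFn (n - q) (r - p - q) : ℝ)) /
        ((((p + q - 1).factorial : ℝ) / (p.factorial : ℝ)) *
          (((r - p - q).factorial : ℝ) / ((r - p - n).factorial : ℝ))) := by
  have hsum : ∑ I ∈ (Finset.Icc 1 r).powersetCard (n - 1), kPure n r p q I =
      ((r - n).factorial : ℝ) *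
        (((∑ I ∈ (Finset.Icc 1 r).powersetCard (n - 1), pureNum n p q I : ℤ) : ℝ)) /
        (((p + q - 1).factorial : ℝ) * ((r - p - q).factorial : ℝ)) := by
    simp only [kPure]
    rw [← Finset.sum_div, ← Finset.mul_sum]
    push_cast
    ring
  rw [hsum, sum_pureNum n r p q hn hr hq1 hqn hp]
  have hrpn : r - p - n = r - n - p := by omega
  rw [hrpn]
  have hkey : ((r - n).choose p : ℝ) * (p.factorial : ℝ) * ((r - n - p).factorial : ℝ) =
      ((r - n).factorial : ℝ) := by
    exact_mod_cast congrArg (Nat.cast : ℕ → ℝ)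
      (Nat.choose_mul_factorial_mul_factorial hp)
  have h1 : (p.factorial : ℝ) ≠ 0 := Nat.cast_ne_zero.mpr p.factorial_ne_zero
  have h2 : ((p + q - 1).factorial : ℝ) ≠ 0 := Nat.cast_ne_zero.mpr (Nat.factorial_ne_zero _)
  have h3 : ((r - p - q).factorial : ℝ) ≠ 0 := Nat.cast_ne_zero.mpr (Nat.factorial_ne_zero _)
  have h4 : ((r - n - p).factorial : ℝ) ≠ 0 := Nat.cast_ne_zero.mpr (Nat.factorial_ne_zero _)
  push_cast
  field_simp
  linear_combination ((sigmaFn (q - 1) (p + q - 1) : ℝ) *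
    (sigmaFn (n - q) (r - p - q) : ℝ)) * (-1) * hkey
end
end

section
/- Let h : ℝ → ℝ be continuous on [0,1] with 0 ≤ h(t) ≤ 1 for all t ∈ [0,1], and assume h is not identically zero on [1/2,1]. Set c_h = ∫_{1/2}^{1} h(t)·(t − 1/2) dt. Then c_h > 0, and for every real number a and every sequence {p_r} of integers with 0 ≤ p_r ≤ r−2 and lim_{r→∞} (2·p_r − r)/√r = a, one has lim_{r→∞} ( Σ_{i=1}^{r} h(i/r) · (i − p_r − 1)_+ ) / ( 2·(r − p_r − 1) · r · c_h ) = 1. -/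
open MeasureTheory Filter intervalIntegral

noncomputable section


lemma riemann_sum_tendsto (g : ℝ → ℝ) (hg : ContinuousOn g (Set.Icc 0 1)) :
    Tendsto (fun n : ℕ => (∑ i ∈ Finset.Icc 1 n, g ((i : ℝ) / n)) / n) atTop
      (nhds (∫ t in (0:ℝ)..1, g t)) := by
  rw [Metric.tendsto_atTop]
  intro ε hε
  have hu := (isCompact_Icc.uniformContinuousOn_of_continuous hg)
  rw [Metric.uniformContinuousOn_iff] at hu
  obtain ⟨δ, hδ, hδ'⟩ := hu (ε/2) (by linarith)
  obtain ⟨N, hN⟩ := exists_nat_gt (1/δ)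
  refine ⟨N + 1, fun n hn => ?_⟩
  have hn1 : 1 ≤ n := le_trans (Nat.le_add_left 1 N) hn
  have hnR : (1:ℝ) ≤ n := by exact_mod_cast hn1
  have hnpos : (0:ℝ) < n := by linarith
  have hNn : (N:ℝ) ≤ n := by exact_mod_cast le_trans (Nat.le_succ N) hn
  have hinv : 1/(n:ℝ) < δ := by
    rw [div_lt_iff₀ hnpos]
    rw [div_lt_iff₀ hδ] at hN
    nlinarith
  -- subinterval endpoints
  set a : ℕ → ℝ := fun k => (k:ℝ)/n with ha
  have hsub : ∀ k, k < n → Set.uIcc (a k) (a (k+1)) ⊆ Set.Icc 0 1 := by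
    intro k hk
    rw [Set.uIcc_of_le (by
      apply div_le_div_of_nonneg_right ?_ hnpos.le
      push_cast; linarith)]
    intro x hx
    constructor
    · exact le_trans (by positivity) hx.1
    · refine le_trans hx.2 ?_
      rw [div_le_one hnpos]
      exact_mod_cast hk
  have hint : ∀ k, k < n → IntervalIntegrable g volume (a k) (a (k+1)) := fun k hk =>
    (hg.mono (hsub k hk)).intervalIntegrable
  have hsum : ∑ k ∈ Finset.range n, ∫ t in a k..a (k+1), g t = ∫ t in (0:ℝ)..1, g t := by
    rw [intervalIntegral.sum_integral_adjacent_intervals hint]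
    have h0 : a 0 = 0 := by simp [ha]
    have h1 : a n = 1 := by simp only [ha]; exact div_self hnpos.ne'
    rw [h0, h1]
  -- per-interval error bound
  have key : ∀ k ∈ Finset.range n, |g (a (k+1)) / n - ∫ t in a k..a (k+1), g t| ≤ ε/2/n := by
    intro k hk
    rw [Finset.mem_range] at hk
    have hmem : a (k+1) ∈ Set.Icc (0:ℝ) 1 := (hsub k hk) (Set.right_mem_uIcc)
    have hlen : a (k+1) - a k = 1/n := by simp only [ha]; push_cast; ring
    have hconst : (∫ _ in a k..a (k+1), g (a (k+1))) = g (a (k+1)) / n := by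
      rw [intervalIntegral.integral_const, smul_eq_mul, hlen]; ring
    rw [← hconst, ← intervalIntegral.integral_sub _root_.intervalIntegrable_const (hint k hk)]
    have := intervalIntegral.norm_integral_le_of_norm_le_const (C := ε/2)
      (f := fun t => g (a (k+1)) - g t) (a := a k) (b := a (k+1)) ?_
    · rw [Real.norm_eq_abs] at this
      refine le_trans this (le_of_eq ?_)
      rw [hlen, abs_of_pos (one_div_pos.mpr hnpos)]
      ring
    · intro x hx
      rw [Set.uIoc_of_le (by linarith [hlen, one_div_pos.mpr hnpos])] at hx
      have hxmem : x ∈ Set.Icc (0:ℝ) 1 := (hsub k hk) (by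
        rw [Set.uIcc_of_le (by linarith [hlen, one_div_pos.mpr hnpos])]
        exact ⟨le_of_lt hx.1, hx.2⟩)
      have hdist : dist (a (k+1)) x < δ := by
        rw [Real.dist_eq, abs_of_nonneg (by linarith [hx.2])]
        have : a (k+1) - x < a (k+1) - a k := by linarith [hx.1]
        linarith [hlen ▸ this]
      have := hδ' _ hmem _ hxmem hdist
      rw [Real.dist_eq] at this
      simpa [Real.norm_eq_abs] using this.le
  -- assemble
  have hre : (∑ i ∈ Finset.Icc 1 n, g ((i : ℝ) / n)) = ∑ k ∈ Finset.range n, g (a (k+1)) := by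
    rw [← Finset.Ico_add_one_right_eq_Icc, Finset.sum_Ico_eq_sum_range]
    refine Finset.sum_congr rfl fun k _ => ?_
    congr 1; push_cast [ha]; ring
  rw [Real.dist_eq, hre, ← hsum, Finset.sum_div, ← Finset.sum_sub_distrib]
  calc |∑ k ∈ Finset.range n, (g (a (k+1)) / n - ∫ t in a k..a (k+1), g t)|
      ≤ ∑ k ∈ Finset.range n, |g (a (k+1)) / n - ∫ t in a k..a (k+1), g t| :=
        Finset.abs_sum_le_sum_abs _ _
    _ ≤ ∑ _k ∈ Finset.range n, ε/2/n := Finset.sum_le_sum key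
    _ = ε/2 := by rw [Finset.sum_const, Finset.card_range, nsmul_eq_mul]; field_simp
    _ < ε := by linarith


lemma integral_g_eq (h : ℝ → ℝ) (hcont : ContinuousOn h (Set.Icc 0 1)) :
    (∫ t in (0:ℝ)..1, h t * max (t - 1/2) 0) = ∫ t in (1/2:ℝ)..1, h t * (t - 1/2) := by
  have hgcont : ContinuousOn (fun t => h t * max (t - 1/2) 0) (Set.Icc 0 1) :=
    hcont.mul (((continuous_id.sub continuous_const).max continuous_const).continuousOn)
  have i1 : IntervalIntegrable (fun t => h t * max (t - 1/2) 0) volume 0 (1/2) :=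
    (hgcont.mono (fun x hx => by
      rw [Set.uIcc_of_le (by norm_num : (0:ℝ) ≤ 1/2)] at hx
      exact ⟨hx.1, by linarith [hx.2]⟩)).intervalIntegrable
  have i2 : IntervalIntegrable (fun t => h t * max (t - 1/2) 0) volume (1/2) 1 :=
    (hgcont.mono (fun x hx => by
      rw [Set.uIcc_of_le (by norm_num : (1/2:ℝ) ≤ 1)] at hx
      exact ⟨by linarith [hx.1], hx.2⟩)).intervalIntegrable
  rw [← intervalIntegral.integral_add_adjacent_intervals i1 i2]
  have e1 : (∫ t in (0:ℝ)..(1/2), h t * max (t - 1/2) 0) = 0 := by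
    have heq : Set.EqOn (fun t => h t * max (t - 1/2) 0) (fun _ => (0:ℝ))
        (Set.uIcc (0:ℝ) (1/2)) := by
      intro x hx
      rw [Set.uIcc_of_le (by norm_num : (0:ℝ) ≤ 1/2)] at hx
      simp only
      rw [max_eq_right (by linarith [hx.2])]
      ring
    rw [intervalIntegral.integral_congr heq, intervalIntegral.integral_zero]
  have e2 : (∫ t in (1/2:ℝ)..1, h t * max (t - 1/2) 0) = ∫ t in (1/2:ℝ)..1, h t * (t - 1/2) := by
    have heq : Set.EqOn (fun t => h t * max (t - 1/2) 0) (fun t => h t * (t - 1/2))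
        (Set.uIcc (1/2:ℝ) 1) := by
      intro x hx
      rw [Set.uIcc_of_le (by norm_num : (1/2:ℝ) ≤ 1)] at hx
      simp only
      rw [max_eq_left (by linarith [hx.1])]
    rw [intervalIntegral.integral_congr heq]
  rw [e1, e2, zero_add]

set_option maxHeartbeats 1000000 in
theorem stmt12 (h : ℝ → ℝ) (hcont : ContinuousOn h (Set.Icc 0 1))
    (hbd : ∀ t ∈ Set.Icc (0 : ℝ) 1, h t ∈ Set.Icc (0 : ℝ) 1)
    (hne : ∃ t ∈ Set.Icc (1 / 2 : ℝ) 1, h t ≠ 0)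
    (c_h : ℝ) (hch : c_h = ∫ t in (1 / 2 : ℝ)..1, h t * (t - 1 / 2)) :
    0 < c_h ∧
    ∀ a : ℝ, ∀ p : ℕ → ℕ, (∀ r, p r ≤ r - 2) →
      Filter.Tendsto (fun r : ℕ => ((2 * p r : ℝ) - r) / Real.sqrt r)
        Filter.atTop (nhds a) →
      Filter.Tendsto
        (fun r : ℕ =>
          (∑ i ∈ Finset.Icc 1 r,
              h ((i : ℝ) / r) * ((max ((i : ℤ) - p r - 1) 0 : ℤ) : ℝ)) /
            (2 * ((r : ℝ) - p r - 1) * r * c_h))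
        Filter.atTop (nhds 1) := by
  have hsub12 : Set.Icc (1/2:ℝ) 1 ⊆ Set.Icc 0 1 := Set.Icc_subset_Icc (by norm_num) le_rfl
  -- positivity of c_h
  have hpos : 0 < c_h := by
    rw [hch]
    apply intervalIntegral.integral_pos (by norm_num)
    · exact (hcont.mono hsub12).mul ((continuous_id.sub continuous_const).continuousOn)
    · intro x hx
      have hx' : x ∈ Set.Icc (0:ℝ) 1 := hsub12 ⟨hx.1.le, hx.2⟩
      have := hbd x hx'
      have : 0 ≤ h x := this.1
      nlinarith [hx.1]
    · -- exists a point with positive value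
      obtain ⟨t0, ht0, ht0ne⟩ := hne
      have ht0pos : 0 < h t0 := lt_of_le_of_ne (hbd t0 (hsub12 ht0)).1 (Ne.symm ht0ne)
      by_cases hc : t0 = 1/2
      · -- use continuity to find a nearby point in (1/2, 1)
        have hcw : ContinuousWithinAt h (Set.Icc 0 1) (1/2) :=
          hcont (1/2) (by norm_num)
        have hev : ∀ᶠ t in nhdsWithin (1/2 : ℝ) (Set.Icc 0 1), 0 < h t := by
          have : h (1/2) > 0 := hc ▸ ht0pos
          exact hcw.eventually (eventually_gt_nhds this)
        have hle : nhdsWithin (1/2 : ℝ) (Set.Ioo (1/2:ℝ) 1) ≤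
            nhdsWithin (1/2 : ℝ) (Set.Icc 0 1) :=
          nhdsWithin_mono _ (fun x hx => ⟨by linarith [hx.1], hx.2.le⟩)
        have hne' : (nhdsWithin (1/2 : ℝ) (Set.Ioo (1/2:ℝ) 1)).NeBot :=
          left_nhdsWithin_Ioo_neBot (by norm_num)
        have hev2 : ∀ᶠ t in nhdsWithin (1/2 : ℝ) (Set.Ioo (1/2:ℝ) 1), 0 < h t := hle hev
        have hev3 : ∀ᶠ t in nhdsWithin (1/2 : ℝ) (Set.Ioo (1/2:ℝ) 1),
            t ∈ Set.Ioo (1/2:ℝ) 1 := self_mem_nhdsWithin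
        obtain ⟨t1, ht1pos, ht1mem⟩ := (hev2.and hev3).exists
        exact ⟨t1, ⟨ht1mem.1.le, ht1mem.2.le⟩, by nlinarith [ht1mem.1]⟩
      · have h12 : 1/2 < t0 := lt_of_le_of_ne ht0.1 (Ne.symm hc)
        exact ⟨t0, ht0, by nlinarith⟩
  refine ⟨hpos, ?_⟩
  intro a p hp hu
  have hgcont : ContinuousOn (fun t => h t * max (t - 1/2) 0) (Set.Icc 0 1) :=
    hcont.mul (((continuous_id.sub continuous_const).max continuous_const).continuousOn)
  have hT : Tendsto (fun r : ℕ =>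
      (∑ i ∈ Finset.Icc 1 r, h ((i:ℝ)/r) * max ((i:ℝ)/r - 1/2) 0) / r) atTop (nhds c_h) := by
    have := riemann_sum_tendsto _ hgcont
    rwa [integral_g_eq h hcont, ← hch] at this
  -- shift parameter s r = (p r + 1)/r, tends to 1/2
  have hs0 : Tendsto (fun r : ℕ => ((p r : ℝ) + 1)/r - 1/2) atTop (nhds 0) := by
    have hsq_top : Tendsto (fun r : ℕ => Real.sqrt r) atTop atTop := by
      apply tendsto_atTop_atTop.mpr
      intro b
      refine ⟨⌈b^2⌉₊, fun n hn => ?_⟩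
      have hb2 : (b^2 : ℝ) ≤ n := le_trans (Nat.le_ceil _) (by exact_mod_cast hn)
      calc b ≤ |b| := le_abs_self b
        _ = Real.sqrt (b^2) := (Real.sqrt_sq_eq_abs b).symm
        _ ≤ Real.sqrt n := Real.sqrt_le_sqrt hb2
    have t1 : Tendsto (fun r : ℕ => 1/(2 * Real.sqrt r)) atTop (nhds 0) := by
      simp only [one_div]
      exact Tendsto.comp tendsto_inv_atTop_zero
        (Tendsto.const_mul_atTop (by norm_num : (0:ℝ) < 2) hsq_top)
    have t2 : Tendsto (fun r : ℕ => (1:ℝ)/r) atTop (nhds 0) :=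
      tendsto_one_div_atTop_nhds_zero_nat
    have := (hu.mul t1).add t2
    rw [mul_zero, zero_add] at this
    refine this.congr' ?_
    filter_upwards [eventually_ge_atTop 1] with r hr
    have hrpos : (0:ℝ) < r := by exact_mod_cast hr
    have hsq : Real.sqrt r * Real.sqrt r = r := Real.mul_self_sqrt hrpos.le
    have hsqpos : 0 < Real.sqrt r := Real.sqrt_pos.mpr hrpos
    have hkey : (2*(p r:ℝ) - r)/Real.sqrt r * (1/(2*Real.sqrt r))
        = (2*(p r:ℝ) - r)/(2*r) := by
      rw [div_mul_div_comm, mul_one]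
      congr 1
      rw [show Real.sqrt (r:ℝ) * (2*Real.sqrt r) = 2*(Real.sqrt r * Real.sqrt r) by ring, hsq]
    rw [hkey]
    field_simp
    ring
  -- comparison between the shifted sum and the Riemann sum
  have hdiff : ∀ r : ℕ, 1 ≤ r →
      |(∑ i ∈ Finset.Icc 1 r, h ((i:ℝ)/r) * max ((i:ℝ) - p r - 1) 0) / (r:ℝ)^2
        - (∑ i ∈ Finset.Icc 1 r, h ((i:ℝ)/r) * max ((i:ℝ)/r - 1/2) 0) / r|
      ≤ |((p r : ℝ) + 1)/r - 1/2| := by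
    intro r hr
    have hrpos : (0:ℝ) < r := by exact_mod_cast hr
    have key : ∀ i ∈ Finset.Icc 1 r,
        |h ((i:ℝ)/r) * max ((i:ℝ) - p r - 1) 0 / r - h ((i:ℝ)/r) * max ((i:ℝ)/r - 1/2) 0|
        ≤ |((p r : ℝ) + 1)/r - 1/2| := by
      intro i hi
      rw [Finset.mem_Icc] at hi
      have hi1 : (1:ℝ) ≤ i := by exact_mod_cast hi.1
      have hir : (i:ℝ) ≤ r := by exact_mod_cast hi.2
      have hmem : (i:ℝ)/r ∈ Set.Icc (0:ℝ) 1 :=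
        ⟨by positivity, by rw [div_le_one hrpos]; exact hir⟩
      have hb := hbd _ hmem
      have hmono : Monotone (fun x : ℝ => x / (r:ℝ)) := fun x y hxy =>
        div_le_div_of_nonneg_right hxy hrpos.le
      have hmax : max ((i:ℝ) - p r - 1) 0 / r = max ((i:ℝ)/r - ((p r : ℝ) + 1)/r) 0 := by
        rw [hmono.map_max, zero_div]
        congr 1
        ring
      rw [mul_div_assoc, hmax, ← mul_sub, abs_mul]
      have h1 : |h ((i:ℝ)/r)| ≤ 1 := abs_le.mpr ⟨by linarith [hb.1], hb.2⟩
      have h2 : |max ((i:ℝ)/r - ((p r : ℝ) + 1)/r) 0 - max ((i:ℝ)/r - 1/2) 0|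
          ≤ |((p r : ℝ) + 1)/r - 1/2| := by
        refine le_trans (abs_max_sub_max_le_abs _ _ _) ?_
        rw [show (i:ℝ)/r - ((p r : ℝ) + 1)/r - ((i:ℝ)/r - 1/2) = -((((p r : ℝ) + 1))/r - 1/2)
          by ring, abs_neg]
      calc |h ((i:ℝ)/r)| * |max ((i:ℝ)/r - ((p r : ℝ) + 1)/r) 0 - max ((i:ℝ)/r - 1/2) 0|
          ≤ 1 * |((p r : ℝ) + 1)/r - 1/2| := by
            apply mul_le_mul h1 h2 (abs_nonneg _) zero_le_one
        _ = |((p r : ℝ) + 1)/r - 1/2| := one_mul _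
    have step : (∑ i ∈ Finset.Icc 1 r, h ((i:ℝ)/r) * max ((i:ℝ) - p r - 1) 0) / (r:ℝ)^2
        - (∑ i ∈ Finset.Icc 1 r, h ((i:ℝ)/r) * max ((i:ℝ)/r - 1/2) 0) / r
        = (∑ i ∈ Finset.Icc 1 r, (h ((i:ℝ)/r) * max ((i:ℝ) - p r - 1) 0 / r
            - h ((i:ℝ)/r) * max ((i:ℝ)/r - 1/2) 0)) / r := by
      rw [Finset.sum_sub_distrib, Finset.sum_div, sub_div, Finset.sum_div]
      congr 1
      · rw [Finset.sum_div]
        refine Finset.sum_congr rfl fun i _ => ?_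
        rw [div_div]
        congr 1
        ring
    rw [step, abs_div, abs_of_pos hrpos, div_le_iff₀ hrpos]
    calc |∑ i ∈ Finset.Icc 1 r, (h ((i:ℝ)/r) * max ((i:ℝ) - p r - 1) 0 / r
            - h ((i:ℝ)/r) * max ((i:ℝ)/r - 1/2) 0)|
        ≤ ∑ i ∈ Finset.Icc 1 r, |h ((i:ℝ)/r) * max ((i:ℝ) - p r - 1) 0 / r
            - h ((i:ℝ)/r) * max ((i:ℝ)/r - 1/2) 0| := Finset.abs_sum_le_sum_abs _ _
      _ ≤ ∑ _i ∈ Finset.Icc 1 r, |((p r : ℝ) + 1)/r - 1/2| := Finset.sum_le_sum key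
      _ = r * |((p r : ℝ) + 1)/r - 1/2| := by
          rw [Finset.sum_const, Nat.card_Icc, nsmul_eq_mul]
          push_cast
          ring
      _ = |((p r : ℝ) + 1)/r - 1/2| * r := mul_comm _ _
  -- hence the shifted sums converge to c_h
  have hA : Tendsto (fun r : ℕ =>
      (∑ i ∈ Finset.Icc 1 r, h ((i:ℝ)/r) * max ((i:ℝ) - p r - 1) 0) / (r:ℝ)^2)
      atTop (nhds c_h) := by
    have hz : Tendsto (fun r : ℕ =>
        (∑ i ∈ Finset.Icc 1 r, h ((i:ℝ)/r) * max ((i:ℝ) - p r - 1) 0) / (r:ℝ)^2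
          - (∑ i ∈ Finset.Icc 1 r, h ((i:ℝ)/r) * max ((i:ℝ)/r - 1/2) 0) / r)
        atTop (nhds 0) := by
      apply squeeze_zero_norm' (a := fun r : ℕ => |((p r : ℝ) + 1)/r - 1/2|)
      · filter_upwards [eventually_ge_atTop 1] with r hr
        rw [Real.norm_eq_abs]
        exact hdiff r hr
      · have := hs0.abs
        rwa [abs_zero] at this
    have := hz.add hT
    rw [zero_add] at this
    refine this.congr fun r => ?_
    ring
  -- the denominator factor
  have hB : Tendsto (fun r : ℕ => 2 * ((r:ℝ) - p r - 1) / r) atTop (nhds 1) := by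
    have : Tendsto (fun r : ℕ => 1 - 2 * (((p r : ℝ) + 1)/r - 1/2)) atTop (nhds 1) := by
      have := (hs0.const_mul 2).const_sub 1
      rwa [mul_zero, sub_zero] at this
    refine this.congr' ?_
    filter_upwards [eventually_ge_atTop 1] with r hr
    have hrpos : (0:ℝ) < r := by exact_mod_cast hr
    field_simp
    ring
  -- assemble
  have hmain := hA.div (hB.mul_const c_h) (by
    rw [one_mul]; exact hpos.ne')
  rw [show c_h / (1 * c_h) = 1 by rw [one_mul, div_self hpos.ne']] at hmain
  refine hmain.congr' ?_
  filter_upwards [eventually_ge_atTop 2] with r hr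
  have hr2 : (2:ℝ) ≤ r := by exact_mod_cast hr
  have hrpos : (0:ℝ) < r := by linarith
  have hpr : (p r : ℝ) ≤ (r:ℝ) - 2 := by
    have := hp r
    have h2 : ((p r : ℕ) : ℝ) ≤ ((r - 2 : ℕ) : ℝ) := by exact_mod_cast this
    rwa [Nat.cast_sub hr] at h2
    
  have hx : (1:ℝ) ≤ (r:ℝ) - p r - 1 := by linarith
  have hxpos : (0:ℝ) < (r:ℝ) - p r - 1 := by linarith
  have hsum_eq : (∑ i ∈ Finset.Icc 1 r, h ((i:ℝ)/r) * ((max ((i:ℤ) - p r - 1) 0 : ℤ) : ℝ))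
      = ∑ i ∈ Finset.Icc 1 r, h ((i:ℝ)/r) * max ((i:ℝ) - p r - 1) 0 := by
    refine Finset.sum_congr rfl fun i _ => ?_
    congr 1
    push_cast
    rfl
  rw [hsum_eq]
  rw [eq_comm]
  simp only [Pi.div_apply]
  field_simp
end
end

section
/- Let h : ℝ → ℝ be continuous on [0,1], and let {p_r} be a sequence of integers with lim_{r→∞} p_r/r = 1/2. Then lim_{r→∞} (1/r²) · Σ_{i=1}^{r} h(i/r) · (i − p_r − 1)_+ = ∫_{1/2}^{1} h(t)·(t − 1/2) dt. -/
open MeasureTheory Filter intervalIntegral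

noncomputable section

lemma riemann_icc (g : ℝ → ℝ) (hg : ContinuousOn g (Set.Icc 0 1)) :
    Tendsto (fun r : ℕ => (1 / (r : ℝ)) * ∑ i ∈ Finset.Icc 1 r, g ((i : ℝ) / r)) atTop
      (nhds (∫ t in (0:ℝ)..1, g t)) := by
  rw [Metric.tendsto_atTop]
  intro ε hε
  obtain ⟨δ, hδ, hδ'⟩ := Metric.uniformContinuousOn_iff.mp
    (isCompact_Icc.uniformContinuousOn_of_continuous hg) (ε/2) (by linarith)
  obtain ⟨N, hN⟩ := exists_nat_gt (1/δ)
  refine ⟨N + 1, fun r hr => ?_⟩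
  have hr1 : 1 ≤ r := le_trans (Nat.le_add_left 1 N) hr
  have hrpos : (0:ℝ) < r := by exact_mod_cast hr1
  have hrδ : 1 / (r:ℝ) < δ := by
    rw [div_lt_iff₀ hrpos, ← div_lt_iff₀' hδ]
    calc 1/δ < N := hN
    _ ≤ r := by exact_mod_cast le_trans (Nat.le_succ N) hr
  have hstep : ∀ k : ℕ, ((k:ℝ)+1)/r - (k:ℝ)/r = 1/r := by
    intro k; field_simp; ring
  have hle : ∀ k : ℕ, ((k:ℝ))/r ≤ ((k:ℝ)+1)/r := by
    intro k; gcongr; linarith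
  have hub : ∀ k : ℕ, k < r → ((k:ℝ)+1)/r ≤ 1 := by
    intro k hk
    rw [div_le_one hrpos]
    have : (k:ℝ) + 1 ≤ r := by exact_mod_cast hk
    linarith
  have hsub : ∀ k : ℕ, k < r → Set.uIcc ((k:ℝ)/r) (((k:ℝ)+1)/r) ⊆ Set.Icc 0 1 := by
    intro k hk
    rw [Set.uIcc_of_le (hle k)]
    intro x hx
    exact ⟨le_trans (by positivity) hx.1, le_trans hx.2 (hub k hk)⟩
  have hint : ∀ k : ℕ, k < r →
      IntervalIntegrable g volume ((k:ℝ)/r) (((k:ℝ)+1)/r) := by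
    intro k hk
    exact (hg.mono (hsub k hk)).intervalIntegrable
  have hsplit : (∫ t in (0:ℝ)..1, g t)
      = ∑ k ∈ Finset.range r, ∫ t in ((k:ℝ)/r)..(((k:ℝ)+1)/r), g t := by
    have := intervalIntegral.sum_integral_adjacent_intervals (a := fun k : ℕ => (k:ℝ)/r)
      (n := r) (μ := volume) (f := g) ?_
    · push_cast at this
      rw [this]
      norm_num
      rw [div_self hrpos.ne']
    · intro k hk
      have := hint k hk
      push_cast
      simpa using this
  have hsum : (1 / (r : ℝ)) * ∑ i ∈ Finset.Icc 1 r, g ((i : ℝ) / r)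
      = ∑ k ∈ Finset.range r, ∫ _ in ((k:ℝ)/r)..(((k:ℝ)+1)/r), g (((k:ℝ)+1)/r) := by
    rw [← Finset.Ico_add_one_right_eq_Icc, Finset.sum_Ico_eq_sum_range]
    rw [Finset.mul_sum]
    refine Finset.sum_congr rfl fun k _ => ?_
    rw [intervalIntegral.integral_const, hstep k]
    push_cast
    rw [smul_eq_mul]
    ring_nf
  rw [hsum, hsplit, Real.dist_eq, ← Finset.sum_sub_distrib]
  calc |∑ k ∈ Finset.range r,
        ((∫ _ in ((k:ℝ)/r)..(((k:ℝ)+1)/r), g (((k:ℝ)+1)/r))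
          - ∫ t in ((k:ℝ)/r)..(((k:ℝ)+1)/r), g t)|
      ≤ ∑ k ∈ Finset.range r, (ε/2) * (1/r) := by
        refine le_trans (Finset.abs_sum_le_sum_abs _ _) (Finset.sum_le_sum fun k hk => ?_)
        have hk' := Finset.mem_range.mp hk
        rw [← intervalIntegral.integral_sub intervalIntegrable_const (hint k hk')]
        have := intervalIntegral.norm_integral_le_of_norm_le_const
          (f := fun t => g (((k:ℝ)+1)/r) - g t)
          (a := (k:ℝ)/r) (b := (((k:ℝ)+1)/r)) (C := ε/2) ?_
        · refine le_trans this ?_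
          rw [abs_of_nonneg (by linarith [hstep k, hle k])]
          rw [hstep k]
        · intro t ht
          rw [Set.uIoc_of_le (hle k)] at ht
          have h0 : (0:ℝ) ≤ (k:ℝ)/r := by positivity
          have ht' : t ∈ Set.Icc (0:ℝ) 1 := ⟨by linarith [ht.1], le_trans ht.2 (hub k hk')⟩
          have hm : ((k:ℝ)+1)/r ∈ Set.Icc (0:ℝ) 1 := ⟨by positivity, hub k hk'⟩
          have hd : dist (((k:ℝ)+1)/r) t < δ := by
            rw [Real.dist_eq, abs_of_nonneg (by linarith [ht.2])]
            have := hstep k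
            have := ht.1
            linarith
          have := hδ' _ hm _ ht' hd
          rw [Real.dist_eq] at this
          exact le_of_lt this
    _ = (ε/2) * (1/r) * r := by rw [Finset.sum_const, Finset.card_range]; ring
    _ < ε := by
        rw [mul_assoc, one_div_mul_cancel hrpos.ne']
        linarith


theorem stmt13 (h : ℝ → ℝ) (hcont : ContinuousOn h (Set.Icc 0 1))
    (p : ℕ → ℤ)
    (hplim : Filter.Tendsto (fun r : ℕ => (p r : ℝ) / r) Filter.atTop (nhds (1 / 2))) :
    Filter.Tendsto
      (fun r : ℕ =>
        (1 / (r : ℝ) ^ 2) *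
          ∑ i ∈ Finset.Icc 1 r,
            h ((i : ℝ) / r) * ((max ((i : ℤ) - p r - 1) 0 : ℤ) : ℝ))
      Filter.atTop (nhds (∫ t in (1 / 2 : ℝ)..1, h t * (t - 1 / 2))) := by
  set g : ℝ → ℝ := fun t => h t * max (t - 1/2) 0 with hg
  have hgc : ContinuousOn g (Set.Icc 0 1) :=
    hcont.mul ((continuous_id.sub continuous_const).max continuous_const).continuousOn
  -- integral identity
  have hI : (∫ t in (0:ℝ)..1, g t) = ∫ t in (1/2:ℝ)..1, h t * (t - 1/2) := by
    have i1 : IntervalIntegrable g volume 0 (1/2) := by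
      apply ContinuousOn.intervalIntegrable
      apply hgc.mono
      rw [Set.uIcc_of_le (by norm_num)]
      exact Set.Icc_subset_Icc le_rfl (by norm_num)
    have i2 : IntervalIntegrable g volume (1/2) 1 := by
      apply ContinuousOn.intervalIntegrable
      apply hgc.mono
      rw [Set.uIcc_of_le (by norm_num)]
      exact Set.Icc_subset_Icc (by norm_num) le_rfl
    rw [← intervalIntegral.integral_add_adjacent_intervals i1 i2]
    have e1 : (∫ t in (0:ℝ)..(1/2), g t) = 0 := by
      rw [intervalIntegral.integral_congr (g := fun _ => (0:ℝ))]
      · simp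
      · intro t ht
        rw [Set.uIcc_of_le (by norm_num)] at ht
        simp only [hg]
        rw [max_eq_right (by linarith [ht.2])]
        ring
    have e2 : (∫ t in (1/2:ℝ)..1, g t) = ∫ t in (1/2:ℝ)..1, h t * (t - 1/2) := by
      apply intervalIntegral.integral_congr
      intro t ht
      rw [Set.uIcc_of_le (by norm_num)] at ht
      simp only [hg]
      rw [max_eq_left (by linarith [ht.1])]
    rw [e1, e2, zero_add]
  -- Riemann sums of g
  have hB : Tendsto (fun r : ℕ => (1 / (r : ℝ)) * ∑ i ∈ Finset.Icc 1 r, g ((i : ℝ) / r)) atTop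
      (nhds (∫ t in (0:ℝ)..1, g t)) := riemann_icc g hgc
  -- bound for h
  obtain ⟨M, hM⟩ := isCompact_Icc.exists_bound_of_continuousOn hcont
  have hM0 : 0 ≤ M := le_trans (norm_nonneg _) (hM 0 (by norm_num))
  set A : ℕ → ℝ := fun r =>
    (1 / (r : ℝ) ^ 2) * ∑ i ∈ Finset.Icc 1 r,
      h ((i : ℝ) / r) * ((max ((i : ℤ) - p r - 1) 0 : ℤ) : ℝ) with hA
  set B : ℕ → ℝ := fun r => (1 / (r : ℝ)) * ∑ i ∈ Finset.Icc 1 r, g ((i : ℝ) / r) with hBdef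
  -- error bound
  have hbound : ∀ r : ℕ, |A r - B r| ≤ M * |((p r : ℝ) + 1) / r - 1/2| := by
    intro r
    rcases Nat.eq_zero_or_pos r with hr0 | hrpos
    · subst hr0
      simp [hA, hBdef]
      positivity
    have hrR : (0:ℝ) < r := by exact_mod_cast hrpos
    have key : A r - B r = (1 / (r:ℝ)) * ∑ i ∈ Finset.Icc 1 r,
        (h ((i : ℝ) / r) *
          (max (((i:ℝ) - (p r : ℝ) - 1) / r) 0 - max ((i:ℝ)/r - 1/2) 0)) := by
      simp only [hA, hBdef, hg, Finset.mul_sum, ← Finset.sum_sub_distrib]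
      refine Finset.sum_congr rfl fun i _ => ?_
      push_cast
      have hmd : (((i:ℝ) - (p r : ℝ) - 1) / r) ⊔ 0 = (((i:ℝ) - (p r : ℝ) - 1) ⊔ 0) / r := by
        rw [← max_div_div_right (le_of_lt hrR), zero_div]
      rw [hmd]
      field_simp
    rw [key, abs_mul, abs_of_nonneg (by positivity : (0:ℝ) ≤ 1/(r:ℝ))]
    have hterm : ∀ i ∈ Finset.Icc 1 r,
        |h ((i : ℝ) / r) *
          (max (((i:ℝ) - (p r : ℝ) - 1) / r) 0 - max ((i:ℝ)/r - 1/2) 0)|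
          ≤ M * |((p r : ℝ) + 1) / r - 1/2| := by
      intro i hi
      have hi' := Finset.mem_Icc.mp hi
      have hmem : ((i:ℝ)/r) ∈ Set.Icc (0:ℝ) 1 := by
        constructor
        · positivity
        · rw [div_le_one hrR]; exact_mod_cast hi'.2
      rw [abs_mul]
      have h1 : |h ((i:ℝ)/r)| ≤ M := hM _ hmem
      have h2 : |max (((i:ℝ) - (p r : ℝ) - 1) / r) 0 - max ((i:ℝ)/r - 1/2) 0|
          ≤ |((p r : ℝ) + 1) / r - 1/2| := by
        refine le_trans (abs_max_sub_max_le_abs _ _ _) ?_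
        rw [abs_sub_comm]
        apply le_of_eq
        congr 1
        field_simp
        ring
      exact mul_le_mul h1 h2 (abs_nonneg _) hM0
    calc (1/(r:ℝ)) * |∑ i ∈ Finset.Icc 1 r, _|
        ≤ (1/(r:ℝ)) * ∑ i ∈ Finset.Icc 1 r, (M * |((p r : ℝ) + 1) / r - 1/2|) := by
          apply mul_le_mul_of_nonneg_left _ (by positivity)
          exact le_trans (Finset.abs_sum_le_sum_abs _ _) (Finset.sum_le_sum hterm)
      _ = M * |((p r : ℝ) + 1) / r - 1/2| := by
          rw [Finset.sum_const, Nat.card_Icc]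
          simp only [nsmul_eq_mul]
          rw [Nat.add_sub_cancel]
          field_simp
  -- the bound tends to 0
  have hq : Tendsto (fun r : ℕ => M * |((p r : ℝ) + 1) / r - 1/2|) atTop (nhds 0) := by
    have h1 : Tendsto (fun r : ℕ => ((p r : ℝ) + 1) / r - 1/2) atTop (nhds 0) := by
      have := (hplim.add tendsto_one_div_atTop_nhds_zero_nat).sub
        (tendsto_const_nhds (x := (1/2 : ℝ)))
      norm_num at this
      convert this using 2 with r
      rw [add_div, one_div]
    have h2 := h1.abs
    rw [abs_zero] at h2
    have := h2.const_mul M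
    simpa using this
  have hE : Tendsto (fun r => A r - B r) atTop (nhds 0) :=
    squeeze_zero_norm hbound hq
  have := hB.add hE
  rw [hI] at this
  simp only [add_zero] at this
  convert this using 2 with r
  ring
end
end

section
/- Fix an integer g ≥ 0 and a real number a. For integers d > g and 0 ≤ p ≤ d−g, define k(d,p) = C(d−g, p) · ( −p·d/(d−g) + (d+1−g) − (d+1−g)/(p+1) ), where C(·,·) is the binomial coefficient. Let {p_d} be a sequence of integers with 0 ≤ p_d ≤ d−g and lim_{d→∞} (2·p_d − (d−g))/√(d−g) = a. Then lim_{d→∞} (1/2^{d−g}) · √(2π/(d−g)) · k(d, p_d) = e^{−a²/2}. -/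
open Filter Real

noncomputable section

/-- `k(d,p) = C(d−g,p)·(−p·d/(d−g) + (d+1−g) − (d+1−g)/(p+1))`, the Betti number
`k_{p,1}(X;L_d)` of a curve of genus `g` embedded by a divisor of degree `d`. -/
def kCurve (g d p : ℕ) : ℝ :=
  ((d - g).choose p : ℝ) *
    (-((p : ℝ) * d) / ((d : ℝ) - g) + ((d : ℝ) + 1 - g) - ((d : ℝ) + 1 - g) / ((p : ℝ) + 1))


lemma stirlingSeq_pos' {k : ℕ} (hk : 1 ≤ k) : 0 < Stirling.stirlingSeq k := by
  obtain ⟨j, rfl⟩ := Nat.exists_eq_add_of_le hk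
  rw [add_comm]
  exact Stirling.stirlingSeq'_pos j

lemma fact_eq {k : ℕ} (hk : 1 ≤ k) :
    (Nat.factorial k : ℝ) = Stirling.stirlingSeq k * (Real.sqrt (2*k) * ((k:ℝ)/Real.exp 1)^k) := by
  have hk0 : (0:ℝ) < k := by exact_mod_cast hk
  rw [Stirling.stirlingSeq]
  field_simp

lemma choose_stirling (q m : ℕ) (hq : 1 ≤ q) (hm : 1 ≤ m) :
    ((q+m).choose q : ℝ) =
      (Stirling.stirlingSeq (q+m) / (Stirling.stirlingSeq q * Stirling.stirlingSeq m)) *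
      (Real.sqrt (2*((q:ℝ)+m)) / (Real.sqrt (2*q) * Real.sqrt (2*m))) *
      (((q:ℝ)+m)^(q+m) / ((q:ℝ)^q * (m:ℝ)^m)) := by
  have hqm : 1 ≤ q + m := le_trans hq (Nat.le_add_right q m)
  rw [Nat.cast_choose ℝ (Nat.le_add_right q m), Nat.add_sub_cancel_left]
  rw [fact_eq hqm, fact_eq hq, fact_eq hm]
  have hq0 : (0:ℝ) < q := by exact_mod_cast hq
  have hm0 : (0:ℝ) < m := by exact_mod_cast hm
  have hsq := stirlingSeq_pos' hq
  have hsm := stirlingSeq_pos' hm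
  have hrq : (0:ℝ) < Real.sqrt (2*q) := Real.sqrt_pos.2 (by linarith)
  have hrm : (0:ℝ) < Real.sqrt (2*m) := Real.sqrt_pos.2 (by linarith)
  have hcast : ((q+m : ℕ) : ℝ) = (q:ℝ) + m := by push_cast; ring
  rw [hcast, div_pow, div_pow, div_pow, pow_add (Real.exp 1)]
  have he : (0:ℝ) < Real.exp 1 := Real.exp_pos 1
  field_simp

lemma final_alg (q m : ℕ) (f' : ℝ) (hq : 1 ≤ q) (hm : 1 ≤ m) :
    (Real.sqrt π * Stirling.stirlingSeq (q+m) / (Stirling.stirlingSeq q * Stirling.stirlingSeq m)) *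
      (f' / Real.sqrt ((q:ℝ)*(m:ℝ))) *
      (((q:ℝ)+m)^(q+m) / (2^(q+m) * (q:ℝ)^q * (m:ℝ)^m))
    = (1/(2:ℝ)^(q+m)) * Real.sqrt (2*π/((q:ℝ)+m)) * (((q+m).choose q : ℝ) * f') := by
  have hq0 : (0:ℝ) < q := by exact_mod_cast hq
  have hm0 : (0:ℝ) < m := by exact_mod_cast hm
  have hN0 : (0:ℝ) < (q:ℝ)+m := by linarith
  have hsq := stirlingSeq_pos' hq
  have hsm := stirlingSeq_pos' hm
  rw [choose_stirling q m hq hm]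
  have e1 : Real.sqrt (2*π/((q:ℝ)+m)) = 2*Real.sqrt π / Real.sqrt (2*((q:ℝ)+m)) := by
    rw [eq_div_iff (by positivity : Real.sqrt (2*((q:ℝ)+m)) ≠ 0)]
    rw [← Real.sqrt_mul (by positivity)]
    rw [show 2*π/((q:ℝ)+m) * (2*((q:ℝ)+m)) = 2^2*π by field_simp]
    rw [Real.sqrt_mul (by positivity), Real.sqrt_sq (by norm_num)]
  have e2 : Real.sqrt (2*(q:ℝ)) * Real.sqrt (2*(m:ℝ)) = 2*Real.sqrt ((q:ℝ)*m) := by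
    rw [← Real.sqrt_mul (by positivity), show 2*(q:ℝ)*(2*(m:ℝ)) = 2^2*((q:ℝ)*m) by ring,
      Real.sqrt_mul (by positivity), Real.sqrt_sq (by norm_num)]
  rw [e1, e2]
  have hsqm : (0:ℝ) < Real.sqrt ((q:ℝ)*m) := Real.sqrt_pos.2 (by positivity)
  have hs2N : (0:ℝ) < Real.sqrt (2*((q:ℝ)+m)) := Real.sqrt_pos.2 (by positivity)
  field_simp

lemma tendsto_sqrt_atTop : Tendsto Real.sqrt atTop atTop := by
  apply tendsto_atTop_atTop.2
  intro b
  refine ⟨b^2, fun x hx => ?_⟩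
  calc b ≤ |b| := le_abs_self b
  _ = Real.sqrt (b^2) := (Real.sqrt_sq_eq_abs b).symm
  _ ≤ Real.sqrt x := Real.sqrt_le_sqrt hx

lemma log_taylor3 {t : ℝ} (ht : |t| ≤ 1/2) :
    |Real.log (1 - t) - (-t - t^2/2 - t^3/3)| ≤ 2*t^4 := by
  have h1 : |t| < 1 := lt_of_le_of_lt ht (by norm_num)
  have := Real.abs_log_sub_add_sum_range_le h1 3
  have hs : (∑ i ∈ Finset.range 3, t ^ (i + 1) / (i + 1)) = t + t^2/2 + t^3/3 := by
    simp [Finset.sum_range_succ]; ring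
  rw [hs] at this
  have h2 : |t|^4 / (1 - |t|) ≤ 2*t^4 := by
    rw [div_le_iff₀ (by linarith)]
    have : |t|^4 = t^4 := by
      rw [← abs_pow]; exact abs_of_nonneg (by positivity)
    nlinarith [abs_nonneg t, pow_nonneg (abs_nonneg t) 4, sq_nonneg t]
  calc |Real.log (1 - t) - (-t - t^2/2 - t^3/3)|
      = |(t + t^2/2 + t^3/3) + Real.log (1-t)| := by ring_nf
    _ ≤ |t|^4 / (1 - |t|) := this
    _ ≤ 2*t^4 := h2

lemma phi_bound {t : ℝ} (ht : |t| ≤ 1/2) :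
    |(1+t)*Real.log (1+t) + (1-t)*Real.log (1-t) - t^2| ≤ 7*t^4 := by
  have hmt : |(-t)| ≤ 1/2 := by rwa [abs_neg]
  have h1 := log_taylor3 hmt
  have h2 := log_taylor3 ht
  rw [show (1 : ℝ) - -t = 1 + t by ring] at h1
  set E1 := Real.log (1+t) - (t - t^2/2 + t^3/3) with hE1
  set E2 := Real.log (1-t) - (-t - t^2/2 - t^3/3) with hE2
  have h1' : |E1| ≤ 2*t^4 := by
    have : E1 = Real.log (1+t) - (-(-t) - (-t)^2/2 - (-t)^3/3) := by rw [hE1]; ring_nf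
    rw [this]; convert h1 using 2; ring
  have key : (1+t)*Real.log (1+t) + (1-t)*Real.log (1-t) - t^2
      = (1+t)*E1 + (1-t)*E2 + (2/3)*t^4 := by
    rw [hE1, hE2]; ring
  rw [key]
  have ha : |1+t| ≤ 3/2 := by rw [abs_le] at ht ⊢; constructor <;> linarith [ht.1, ht.2]
  have hb : |1-t| ≤ 3/2 := by rw [abs_le] at ht ⊢; constructor <;> linarith [ht.1, ht.2]
  have ht4 : (0:ℝ) ≤ t^4 := by positivity
  have step : |(1+t)*E1 + (1-t)*E2 + (2/3)*t^4|
      ≤ abs (1+t) * abs E1 + abs (1-t) * abs E2 + (2/3)*t^4 := by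
    refine (abs_add_le _ _).trans ?_
    gcongr
    · refine (abs_add_le _ _).trans ?_
      rw [abs_mul, abs_mul]
    · rw [abs_of_nonneg (by positivity)]
  refine step.trans ?_
  have e1 : abs (1+t) * abs E1 ≤ (3/2)*(2*t^4) := by
    apply mul_le_mul ha h1' (abs_nonneg _) (by norm_num)
  have e2 : abs (1-t) * abs E2 ≤ (3/2)*(2*t^4) := by
    apply mul_le_mul hb h2 (abs_nonneg _) (by norm_num)
  nlinarith

lemma crat_eq_exp (q m : ℕ) (hq : 1 ≤ q) (hm : 1 ≤ m) :
    ((q:ℝ)+m)^(q+m) / (2^(q+m) * (q:ℝ)^q * (m:ℝ)^m) =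
      Real.exp (-(((q:ℝ)+m)/2) *
        ((1 + ((q:ℝ)-m)/((q:ℝ)+m)) * Real.log (1 + ((q:ℝ)-m)/((q:ℝ)+m)) +
         (1 - ((q:ℝ)-m)/((q:ℝ)+m)) * Real.log (1 - ((q:ℝ)-m)/((q:ℝ)+m)))) := by
  have hq0 : (0:ℝ) < q := by exact_mod_cast hq
  have hm0 : (0:ℝ) < m := by exact_mod_cast hm
  have hN0 : (0:ℝ) < (q:ℝ)+m := by linarith
  have h1t : 1 + ((q:ℝ)-m)/((q:ℝ)+m) = 2*q/((q:ℝ)+m) := by field_simp; ring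
  have h2t : 1 - ((q:ℝ)-m)/((q:ℝ)+m) = 2*m/((q:ℝ)+m) := by field_simp; ring
  rw [h1t, h2t]
  have key : -(((q:ℝ)+m)/2) * ((2*q/((q:ℝ)+m)) * Real.log (2*q/((q:ℝ)+m)) +
      (2*m/((q:ℝ)+m)) * Real.log (2*m/((q:ℝ)+m))) =
      ((q+m : ℕ) : ℝ) * Real.log ((q:ℝ)+m) -
        (((q+m : ℕ) : ℝ) * Real.log 2 + (q:ℝ) * Real.log q + (m:ℝ) * Real.log m) := by
    rw [Real.log_div (by positivity) (by positivity), Real.log_div (by positivity) (by positivity),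
      Real.log_mul (by norm_num) (by positivity), Real.log_mul (by norm_num) (by positivity)]
    push_cast
    field_simp
    ring
  rw [key, Real.exp_sub, Real.exp_add, Real.exp_add, Real.exp_nat_mul, Real.exp_nat_mul]
  rw [Real.exp_nat_mul (Real.log (q:ℝ)) q, Real.exp_nat_mul (Real.log (m:ℝ)) m,
    Real.exp_log hN0, Real.exp_log hq0, Real.exp_log hm0, Real.exp_log (by norm_num : (0:ℝ) < 2)]
def tf (g : ℕ) (p : ℕ → ℕ) (d : ℕ) : ℝ :=
  ((p d : ℝ) - ((d - g - p d : ℕ) : ℝ)) / ((p d : ℝ) + ((d - g - p d : ℕ) : ℝ))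

def Lf (g : ℕ) (p : ℕ → ℕ) (d : ℕ) : ℝ :=
  -(((p d : ℝ) + ((d - g - p d : ℕ) : ℝ))/2) *
    ((1 + tf g p d) * Real.log (1 + tf g p d) + (1 - tf g p d) * Real.log (1 - tf g p d))
lemma crat_eq_exp' (g : ℕ) (p : ℕ → ℕ) (d : ℕ) (hq : 1 ≤ p d) (hm : 1 ≤ d - g - p d) :
    ((p d:ℝ) + ((d-g-p d:ℕ):ℝ))^(p d + (d-g-p d)) /
      (2^(p d + (d-g-p d)) * (p d:ℝ)^(p d) * ((d-g-p d:ℕ):ℝ)^(d-g-p d)) = Real.exp (Lf g p d) := by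
  rw [Lf, tf]
  exact crat_eq_exp (p d) (d-g-p d) hq hm

theorem stmt14 (g : ℕ) (a : ℝ) (p : ℕ → ℕ)
    (hp : ∀ d, p d ≤ d - g)
    (hplim : Filter.Tendsto
      (fun d : ℕ => ((2 * p d : ℝ) - ((d : ℝ) - g)) / Real.sqrt ((d : ℝ) - g))
      Filter.atTop (nhds a)) :
    Filter.Tendsto
      (fun d : ℕ =>
        (1 / (2 : ℝ) ^ (d - g)) * Real.sqrt (2 * π / ((d : ℝ) - g)) * kCurve g d (p d))
      Filter.atTop (nhds (Real.exp (-a ^ 2 / 2))) := by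
  have hnat : Tendsto (fun d => d - g) atTop atTop := tendsto_sub_atTop_nat g
  have hN : Tendsto (fun d : ℕ => ((d - g : ℕ) : ℝ)) atTop atTop :=
    tendsto_natCast_atTop_atTop.comp hnat
  have hNpos : ∀ᶠ d : ℕ in atTop, 0 < ((d - g : ℕ) : ℝ) := hN.eventually_gt_atTop 0
  have hdg : ∀ᶠ d : ℕ in atTop, g ≤ d := eventually_ge_atTop g
  have hcastN : ∀ᶠ d : ℕ in atTop, (d : ℝ) - g = ((d - g : ℕ) : ℝ) := by
    filter_upwards [hdg] with d hd
    push_cast [Nat.cast_sub hd]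
    ring
  have hsqrtN : Tendsto (fun d : ℕ => Real.sqrt ((d - g : ℕ) : ℝ)) atTop atTop :=
    _root_.tendsto_sqrt_atTop.comp hN
  -- the normalized variable x
  have hx : Tendsto (fun d : ℕ => (2 * (p d : ℝ) - ((d - g : ℕ) : ℝ)) / Real.sqrt ((d - g : ℕ) : ℝ))
      atTop (nhds a) := by
    apply hplim.congr'
    filter_upwards [hcastN] with d h
    rw [h]
  set x : ℕ → ℝ := fun d => (2 * (p d : ℝ) - ((d - g : ℕ) : ℝ)) / Real.sqrt ((d - g : ℕ) : ℝ)
    with hxdef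
  have ht0 : Tendsto (fun d => x d / Real.sqrt ((d - g : ℕ) : ℝ)) atTop (nhds 0) :=
    hx.div_atTop hsqrtN
  have hQN : Tendsto (fun d : ℕ => (p d : ℝ) / ((d - g : ℕ) : ℝ)) atTop (nhds (1/2)) := by
    have h2 : Tendsto (fun d => (1 + x d / Real.sqrt ((d - g : ℕ) : ℝ)) / 2) atTop
        (nhds ((1 + 0) / 2)) := (tendsto_const_nhds.add ht0).div_const 2
    norm_num at h2
    apply h2.congr'
    filter_upwards [hNpos] with d hd
    have hss : Real.sqrt ((d - g : ℕ) : ℝ) * Real.sqrt ((d - g : ℕ) : ℝ) = ((d - g : ℕ) : ℝ) :=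
      Real.mul_self_sqrt hd.le
    have hs0 : Real.sqrt ((d - g : ℕ) : ℝ) ≠ 0 := by positivity
    rw [hxdef]
    simp only
    rw [div_div, hss]
    field_simp
    ring
  have hMN : Tendsto (fun d : ℕ => ((d - g - p d : ℕ) : ℝ) / ((d - g : ℕ) : ℝ)) atTop
      (nhds (1/2)) := by
    have h2 : Tendsto (fun d : ℕ => 1 - (p d : ℝ) / ((d - g : ℕ) : ℝ)) atTop (nhds (1 - 1/2)) :=
      tendsto_const_nhds.sub hQN
    norm_num at h2
    apply h2.congr'
    filter_upwards [hNpos] with d hd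
    have hMc : ((d - g - p d : ℕ) : ℝ) = ((d - g : ℕ) : ℝ) - (p d : ℝ) := by
      push_cast [Nat.cast_sub (hp d)]
      ring
    rw [hMc]
    field_simp
  have hQtop : Tendsto (fun d => p d) atTop atTop := by
    rw [← tendsto_natCast_atTop_iff (R := ℝ)]
    apply tendsto_atTop_mono' atTop ?_ (hN.atTop_div_const (by norm_num : (0:ℝ) < 4))
    filter_upwards [hQN.eventually (eventually_gt_nhds (by norm_num : (1:ℝ)/4 < 1/2)), hNpos]
      with d h1 h2
    have h3 := (lt_div_iff₀ h2).mp h1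
    linarith
  have hMtop : Tendsto (fun d => d - g - p d) atTop atTop := by
    rw [← tendsto_natCast_atTop_iff (R := ℝ)]
    apply tendsto_atTop_mono' atTop ?_ (hN.atTop_div_const (by norm_num : (0:ℝ) < 4))
    filter_upwards [hMN.eventually (eventually_gt_nhds (by norm_num : (1:ℝ)/4 < 1/2)), hNpos]
      with d h1 h2
    have h3 := (lt_div_iff₀ h2).mp h1
    linarith
  have hq1 : ∀ᶠ d : ℕ in atTop, 1 ≤ p d := hQtop.eventually_ge_atTop 1
  have hm1 : ∀ᶠ d : ℕ in atTop, 1 ≤ d - g - p d := hMtop.eventually_ge_atTop 1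
  -- Part A : Stirling ratio tends to 1
  have hπ : (0:ℝ) < Real.sqrt π := Real.sqrt_pos.2 Real.pi_pos
  have hsn := Stirling.tendsto_stirlingSeq_sqrt_pi.comp hnat
  have hsq := Stirling.tendsto_stirlingSeq_sqrt_pi.comp hQtop
  have hsm := Stirling.tendsto_stirlingSeq_sqrt_pi.comp hMtop
  have limA : Tendsto (fun d => Real.sqrt π * Stirling.stirlingSeq (d - g) /
      (Stirling.stirlingSeq (p d) * Stirling.stirlingSeq (d - g - p d))) atTop (nhds 1) := by
    have h := ((tendsto_const_nhds (x := Real.sqrt π) (f := atTop)).mul hsn).div (hsq.mul hsm)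
      (by positivity)
    have hv : Real.sqrt π * Real.sqrt π / (Real.sqrt π * Real.sqrt π) = 1 :=
      div_self (by positivity)
    rw [hv] at h
    exact h
  -- Part B : the polynomial factor
  have hfN : Tendsto (fun d : ℕ =>
      (-((p d : ℝ) * d) / ((d:ℝ) - g) + ((d:ℝ) + 1 - g) - ((d:ℝ) + 1 - g) / ((p d : ℝ) + 1))
      / ((d - g : ℕ) : ℝ)) atTop (nhds (1/2)) := by
    have hg0 : Tendsto (fun d : ℕ => (g:ℝ) / ((d - g : ℕ):ℝ)) atTop (nhds 0) :=
      tendsto_const_nhds.div_atTop hN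
    have h10 : Tendsto (fun d : ℕ => (1:ℝ) / ((d - g : ℕ):ℝ)) atTop (nhds 0) :=
      tendsto_const_nhds.div_atTop hN
    have hQr : Tendsto (fun d => ((p d : ℝ))) atTop atTop :=
      tendsto_natCast_atTop_atTop.comp hQtop
    have hQ10 : Tendsto (fun d : ℕ => (1:ℝ) / ((p d : ℝ) + 1)) atTop (nhds 0) :=
      tendsto_const_nhds.div_atTop (tendsto_atTop_add_const_right atTop 1 hQr)
    have T : Tendsto (fun d : ℕ =>
        -((p d : ℝ) / ((d - g : ℕ):ℝ) * (1 + (g:ℝ)/((d - g : ℕ):ℝ))) + (1 + 1/((d - g : ℕ):ℝ))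
          - (1 + 1/((d - g : ℕ):ℝ)) * (1/((p d : ℝ)+1))) atTop
        (nhds (-(1/2 * (1 + 0)) + (1 + 0) - (1 + 0) * 0)) :=
      (((hQN.mul (tendsto_const_nhds.add hg0)).neg.add (tendsto_const_nhds.add h10)).sub
        ((tendsto_const_nhds.add h10).mul hQ10))
    rw [show (-(1/2 * (1 + 0)) + (1 + 0) - (1 + 0) * 0 : ℝ) = 1/2 by norm_num] at T
    apply T.congr'
    filter_upwards [hdg, hNpos] with d h1 h2
    have key : ∀ N Q D : ℝ, 0 < N → 0 < Q + 1 → D = N + g →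
        -(Q/N*(1+(g:ℝ)/N)) + (1+1/N) - (1+1/N)*(1/(Q+1))
          = (-(Q*D)/(D - g) + (D+1-g) - (D+1-g)/(Q+1))/N := by
      intro N Q D hN hQ hD
      subst hD
      rw [show N + (g:ℝ) - g = N by ring, show N + (g:ℝ) + 1 - g = N + 1 by ring]
      field_simp
    exact key _ _ _ h2 (by positivity) (by push_cast [Nat.cast_sub h1]; ring)
  have hgNs : Tendsto (fun d : ℕ =>
      Real.sqrt ((p d : ℝ) * ((d - g - p d : ℕ):ℝ)) / ((d - g:ℕ):ℝ)) atTop (nhds (1/2)) := by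
    have h := (hQN.mul hMN).sqrt
    have hv : Real.sqrt (1/2 * (1/2)) = 1/2 := by
      rw [show (1:ℝ)/2 * (1/2) = (1/2)^2 by ring, Real.sqrt_sq (by norm_num)]
    rw [hv] at h
    apply h.congr'
    filter_upwards [hNpos] with d hd
    rw [show (p d : ℝ)/((d-g:ℕ):ℝ) * (((d-g-p d:ℕ):ℝ)/((d-g:ℕ):ℝ))
        = (p d : ℝ) * ((d-g-p d:ℕ):ℝ) / ((d-g:ℕ):ℝ)^2 by ring]
    rw [Real.sqrt_div (by positivity), Real.sqrt_sq hd.le]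
  have limB : Tendsto (fun d : ℕ =>
      (-((p d : ℝ) * d) / ((d:ℝ) - g) + ((d:ℝ) + 1 - g) - ((d:ℝ) + 1 - g) / ((p d : ℝ) + 1))
      / Real.sqrt ((p d : ℝ) * ((d - g - p d : ℕ):ℝ))) atTop (nhds 1) := by
    have h := hfN.div hgNs (by norm_num)
    rw [show ((1:ℝ)/2)/((1:ℝ)/2) = 1 by norm_num] at h
    apply h.congr'
    filter_upwards [hNpos] with d hNd
    simp only [Pi.div_apply]
    rw [div_div_eq_mul_div, div_mul_cancel₀ _ hNd.ne']
  -- Part C : the exponential factor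
  have hxb : ∀ᶠ d in atTop, |x d| ≤ |a| + 1 := by
    have h := hx.eventually (Metric.closedBall_mem_nhds a one_pos)
    filter_upwards [h] with d hd
    rw [Real.dist_eq] at hd
    calc |x d| = |a + (x d - a)| := by ring_nf
    _ ≤ |a| + |x d - a| := abs_add_le _ _
    _ ≤ |a| + 1 := by linarith
  have hsb : ∀ᶠ d : ℕ in atTop, 2*(|a|+1) ≤ Real.sqrt ((d-g:ℕ):ℝ) :=
    hsqrtN.eventually_ge_atTop _
  have hRb : ∀ᶠ d : ℕ in atTop,
      ‖Lf g p d + x d^2/2‖ ≤ 7/2 * (x d)^4 / ((d-g:ℕ):ℝ) := by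
    filter_upwards [hdg, hq1, hm1, hNpos, hxb, hsb] with d h1 h2 h3 h4 h5 h6
    have hsN : (0:ℝ) < Real.sqrt ((d-g:ℕ):ℝ) := Real.sqrt_pos.2 h4
    have hss : Real.sqrt ((d-g:ℕ):ℝ) * Real.sqrt ((d-g:ℕ):ℝ) = ((d-g:ℕ):ℝ) :=
      Real.mul_self_sqrt h4.le
    have hMc : ((d-g-p d:ℕ):ℝ) = ((d-g:ℕ):ℝ) - (p d:ℝ) := by
      push_cast [Nat.cast_sub (hp d)]; ring
    have hts : tf g p d = x d / Real.sqrt ((d-g:ℕ):ℝ) := by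
      rw [tf, hMc, hxdef]
      simp only
      rw [div_div, hss]
      congr 1 <;> ring
    have ht2 : tf g p d ^ 2 = x d^2 / ((d-g:ℕ):ℝ) := by
      rw [hts, div_pow, Real.sq_sqrt h4.le]
    have htle : |tf g p d| ≤ 1/2 := by
      rw [hts, abs_div, abs_of_nonneg (Real.sqrt_nonneg _), div_le_iff₀ hsN]
      nlinarith [abs_nonneg (x d)]
    have hphi := phi_bound htle
    have hQMc : ((d-g:ℕ):ℝ) = (p d:ℝ) + ((d-g-p d:ℕ):ℝ) := by rw [hMc]; ring
    have hLf : Lf g p d = -(((d-g:ℕ):ℝ)/2) *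
        ((1 + tf g p d) * Real.log (1 + tf g p d) +
         (1 - tf g p d) * Real.log (1 - tf g p d)) := by
      rw [Lf, ← hQMc]
    have hx2 : x d ^ 2 = ((d-g:ℕ):ℝ) * tf g p d ^ 2 := by
      rw [ht2, mul_comm, div_mul_cancel₀ _ h4.ne']
    have e : Lf g p d + x d^2/2 = -(((d-g:ℕ):ℝ)/2) *
        ((1 + tf g p d) * Real.log (1 + tf g p d) +
         (1 - tf g p d) * Real.log (1 - tf g p d) - tf g p d ^ 2) := by
      rw [hLf, hx2]; ring
    rw [e, Real.norm_eq_abs, abs_mul, abs_neg, abs_of_nonneg (by positivity : (0:ℝ) ≤ ((d-g:ℕ):ℝ)/2)]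
    calc ((d-g:ℕ):ℝ)/2 * |(1 + tf g p d) * Real.log (1 + tf g p d) +
         (1 - tf g p d) * Real.log (1 - tf g p d) - tf g p d ^ 2|
        ≤ ((d-g:ℕ):ℝ)/2 * (7 * tf g p d ^ 4) := by
          apply mul_le_mul_of_nonneg_left hphi (by positivity)
    _ = 7/2 * (x d)^4 / ((d-g:ℕ):ℝ) := by
          rw [show tf g p d ^4 = (tf g p d^2)^2 by ring, ht2, div_pow]
          have key : ∀ N y : ℝ, 0 < N → N/2 * (7 * ((y^2)^2/N^2)) = 7/2 * y^4/N := by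
            intro N y hN
            field_simp
          exact key _ _ h4
  have hR : Tendsto (fun d => Lf g p d + x d^2/2) atTop (nhds 0) := by
    apply squeeze_zero_norm' hRb
    exact ((tendsto_const_nhds (x := (7:ℝ)/2)).mul (hx.pow 4)).div_atTop hN
  have limL : Tendsto (Lf g p) atTop (nhds (-a^2/2)) := by
    have h := hR.sub ((hx.pow 2).div_const 2)
    rw [zero_sub] at h
    have h2 : Tendsto (fun d => Lf g p d) atTop (nhds (-(a^2/2))) := by
      apply h.congr
      intro d
      ring
    rw [neg_div]
    exact h2
  have limC : Tendsto (fun d : ℕ =>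
      ((d-g:ℕ):ℝ)^(d-g) / (2^(d-g) * (p d:ℝ)^(p d) * ((d-g-p d:ℕ):ℝ)^(d-g-p d)))
      atTop (nhds (Real.exp (-a^2/2))) := by
    have h := (Real.continuous_exp.tendsto _).comp limL
    apply h.congr'
    filter_upwards [hdg, hq1, hm1] with d h1 h2 h3
    show Real.exp (Lf g p d) = _
    rw [← crat_eq_exp' g p d h2 h3]
    have hnm : p d + (d - g - p d) = d - g := Nat.add_sub_cancel' (hp d)
    have hMc : ((d-g-p d:ℕ):ℝ) = ((d-g:ℕ):ℝ) - (p d:ℝ) := by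
      push_cast [Nat.cast_sub (hp d)]; ring
    have hQMc : ((d-g:ℕ):ℝ) = (p d:ℝ) + ((d-g-p d:ℕ):ℝ) := by rw [hMc]; ring
    rw [hnm, ← hQMc]
  -- assemble
  have limABC := (limA.mul limB).mul limC
  rw [one_mul, one_mul] at limABC
  have goalEq : (fun d : ℕ => Real.sqrt π * Stirling.stirlingSeq (d - g) /
        (Stirling.stirlingSeq (p d) * Stirling.stirlingSeq (d - g - p d)) *
        ((-((p d : ℝ) * d) / ((d:ℝ) - g) + ((d:ℝ) + 1 - g) - ((d:ℝ) + 1 - g) / ((p d : ℝ) + 1))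
          / Real.sqrt ((p d : ℝ) * ((d - g - p d : ℕ):ℝ))) *
        (((d-g:ℕ):ℝ)^(d-g) / (2^(d-g) * (p d:ℝ)^(p d) * ((d-g-p d:ℕ):ℝ)^(d-g-p d))))
      =ᶠ[atTop] (fun d : ℕ =>
        (1 / (2 : ℝ) ^ (d - g)) * Real.sqrt (2 * π / ((d : ℝ) - g)) * kCurve g d (p d)) := by
    filter_upwards [hdg, hq1, hm1] with d h1 h2 h3
    simp only [kCurve]
    have hc1 : (d:ℝ) - g = ((d-g:ℕ):ℝ) := by push_cast [Nat.cast_sub h1]; ring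
    rw [hc1]
    set mm := d - g - p d with hmm
    have hnm : p d + mm = d - g := Nat.add_sub_cancel' (hp d)
    rw [← hnm, Nat.cast_add]
    exact final_alg (p d) mm _ h2 h3
  exact (limABC.congr' goalEq)
end
end
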